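/- arXiv:1409.6255 — 4 statements merged into one kernel-verified Lean document; each statement's English description precedes it below -/
import Mathlib

section
/- Let φ : ℝ → ℝ be right-continuous and nondecreasing and let ζ = (ζ₁,…,ζₙ) ∈ 𝒵. Then for every càdlàg submartingale X = (X_t)_{t≤T} with deterministic initial value X_0 = X₀ a.s. (on any filtered probability space), E[φ(X̄_T)] ≤ UB(X, φ, ζ), where both sides take values in (−∞, +∞] (the left-hand side is bounded below by φ(X₀) since X̄_T ≥ X₀). -/
open MeasureTheory ProbabilityTheory Set Filter
open scoped ENNReal NNReal Classical

noncomputable section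

/-- Running maximum of a path over the time interval `[0, t]`. -/
def runMax (f : ℝ → ℝ) (t : ℝ) : ℝ := sSup (f '' Set.Icc 0 t)

/-- Positive part `x⁺ = max (x, 0)`. -/
def ppart (x : ℝ) : ℝ := max x 0

/-- A real function is càdlàg: right-continuous with left limits. -/
def IsCadlag (f : ℝ → ℝ) : Prop :=
  (∀ t, ContinuousWithinAt f (Set.Ici t) t) ∧
  (∀ t, ∃ l : ℝ, Filter.Tendsto f (nhdsWithin t (Set.Iio t)) (nhds l))

/-- The function `λᵢ^{ζ,m}(x)` built from the boundaries `ζ`. -/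
def lam (n : ℕ) (ζ : ℕ → ℝ → ℝ) (m : ℝ) (i : ℕ) (x : ℝ) : ℝ :=
  ppart (x - ζ i m) / (m - ζ i m) -
    (if i < n then ppart (x - ζ (i + 1) m) / (m - ζ (i + 1) m) else 0)

/-- The integrand `∑_{i=1}^n E[λᵢ^{ζ,m}(X_{tᵢ})]` of the upper bound `UB`. -/
def UBsum {Ω : Type} [MeasurableSpace Ω] (μ : Measure Ω) (X : ℝ → Ω → ℝ)
    (t : ℕ → ℝ) (n : ℕ) (ζ : ℕ → ℝ → ℝ) (m : ℝ) : ℝ :=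
  ∑ i ∈ Finset.Icc 1 n, ∫ ω, lam n ζ m i (X (t i) ω) ∂μ

/-- The part `∫_{(X₀,∞)} ∑_{i=1}^n E[λᵢ^{ζ,m}(X_{tᵢ})] dφ(m)` of the upper bound
`UB(X, φ, ζ) = φ(X₀) + UBtail`, as a value in `[0,∞]`; the integral is taken
against the Lebesgue–Stieltjes measure of the nondecreasing right-continuous `φ`. -/
def UBtail {Ω : Type} [MeasurableSpace Ω] (μ : Measure Ω) (X : ℝ → Ω → ℝ)
    (φ : StieltjesFunction ℝ) (x₀ : ℝ) (t : ℕ → ℝ) (n : ℕ) (ζ : ℕ → ℝ → ℝ) : ℝ≥0∞ :=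
  ∫⁻ m in Set.Ioi x₀, ENNReal.ofReal (UBsum μ X t n ζ m) ∂φ.measure

/-- Membership in the class `𝒵`: each `ζᵢ`, `1 ≤ i ≤ n`, is right-continuous on `(X₀,∞)`
and `ζ₁(m) ≤ … ≤ ζₙ(m) < m` for every `m > X₀`. -/
def memZ (x₀ : ℝ) (n : ℕ) (ζ : ℕ → ℝ → ℝ) : Prop :=
  (∀ i ∈ Finset.Icc 1 n, ∀ m ∈ Set.Ioi x₀, ContinuousWithinAt (ζ i) (Set.Ici m) m) ∧
  (∀ i, 1 ≤ i → i < n → ∀ m ∈ Set.Ioi x₀, ζ i m ≤ ζ (i + 1) m) ∧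
  (∀ m ∈ Set.Ioi x₀, ζ n m < m)

/-- Membership in the class `𝒵^cts`: member of `𝒵` with continuous `ζᵢ` on `(X₀,∞)`. -/
def memZcts (x₀ : ℝ) (n : ℕ) (ζ : ℕ → ℝ → ℝ) : Prop :=
  memZ x₀ n ζ ∧ ∀ i ∈ Finset.Icc 1 n, ContinuousOn (ζ i) (Set.Ioi x₀)

/-- Membership in the class `𝒵̃`: member of `𝒵^cts`, strictly increasing boundaries,
`liminf_{m→∞} ζ₁(m)/(αm) ≥ 1` for some `α > 0`, and all boundaries coincide near `X₀`. -/
def memZtilde (x₀ : ℝ) (n : ℕ) (ζ : ℕ → ℝ → ℝ) : Prop :=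
  memZcts x₀ n ζ ∧
  (∀ i ∈ Finset.Icc 1 n, StrictMonoOn (ζ i) (Set.Ioi x₀)) ∧
  (∃ α > (0 : ℝ), 1 ≤ Filter.liminf (fun m => ζ 1 m / (α * m)) Filter.atTop) ∧
  (∃ ε > (0 : ℝ), ∀ i ∈ Finset.Icc 1 n, ∀ m ∈ Set.Ioo x₀ (x₀ + ε), ζ i m = ζ 1 m)

/-- Condition (I), the integrability condition on the pair `(φ, ζ)`. -/
def CondI (φ : ℝ → ℝ) (ζ : ℕ → ℝ → ℝ) : Prop :=
  ∃ α > (0 : ℝ), 1 ≤ Filter.liminf (fun m => ζ 1 m / (α * m)) Filter.atTop ∧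
    ∃ γ : ℝ, γ < 1 / (1 - α) ∧
      Filter.limsup (fun m => φ m / m ^ γ) Filter.atTop = 0


section AuxiliaryProof

open scoped Topology

variable {Ω : Type} [m0 : MeasurableSpace Ω] {μ : Measure Ω}
  {ℱ : Filtration ℝ m0} {X : ℝ → Ω → ℝ}

/-- countable set of times used for approximating the running maximum -/
def Qset (t : ℕ → ℝ) (n : ℕ) : Set ℝ :=
  (Set.range ((↑) : ℚ → ℝ) ∩ Set.Icc 0 (t n)) ∪ (t '' Set.Iic n)

lemma Qset_countable (t : ℕ → ℝ) (n : ℕ) : (Qset t n).Countable :=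
  (((Set.countable_range _).mono Set.inter_subset_left)).union
    ((Set.to_countable _).image _)


lemma telescope_sum (a b : ℕ → ℝ) :
    ∀ n, 1 ≤ n → ∑ i ∈ Finset.Icc 1 n, (a i - if i < n then b i else 0)
      = a 1 + ∑ j ∈ Finset.Ico 1 n, (a (j + 1) - b j) := by
  intro n hn
  induction n, hn using Nat.le_induction with
  | base => simp
  | succ n hn ih =>
    have h0 : ∀ i ∈ Finset.Icc 1 n, (a i - if i < n + 1 then b i else 0)
        = (a i - if i < n then b i else 0) - (if i = n then b n else 0) := by
      intro i hi
      simp only [Finset.mem_Icc] at hi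
      rcases eq_or_lt_of_le hi.2 with h | h
      · subst h; simp
      · simp [h, Nat.lt_succ_of_lt h, Nat.ne_of_lt h]
    have h1 : ∑ i ∈ Finset.Icc 1 n, (a i - if i < n + 1 then b i else 0)
        = (∑ i ∈ Finset.Icc 1 n, (a i - if i < n then b i else 0)) - b n := by
      rw [Finset.sum_congr rfl h0, Finset.sum_sub_distrib, Finset.sum_ite_eq' (Finset.Icc 1 n) n]
      rw [if_pos (Finset.mem_Icc.mpr ⟨hn, le_rfl⟩)]
    rw [Finset.sum_Icc_succ_top (by omega : 1 ≤ n + 1), h1, ih,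
      Finset.sum_Ico_succ_top (by omega : 1 ≤ n)]
    simp; ring

lemma block_ineq [IsProbabilityMeasure μ]
    (hX : Submartingale X ℱ μ)
    {G : ℝ → Ω → ℝ} (hG : Submartingale G ℱ μ)
    {θ κ : ℝ} (hκ : ∀ s ω, θ ≤ X s ω → κ ≤ G s ω)
    {u v : ℝ} {S : Set ℝ} (hS : S.Countable) (hSuv : ∀ s ∈ S, u ≤ s ∧ s ≤ v)
    {E : Set Ω} (hE : MeasurableSet[ℱ u] E) :
    κ * (μ (Eᶜ ∩ {ω | ∃ s ∈ S, θ ≤ X s ω})).toReal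
      ≤ ∫ ω in Eᶜ ∩ {ω | ∃ s ∈ S, θ ≤ X s ω}, G v ω ∂μ := by
  rcases S.eq_empty_or_nonempty with rfl | hne
  · simp
  obtain ⟨e, rfl⟩ := Set.Countable.exists_eq_range hS hne
  have heuv : ∀ j, u ≤ e j ∧ e j ≤ v := fun j => hSuv (e j) (mem_range_self j)
  set H : ℝ → Set Ω := fun s => {ω | θ ≤ X s ω} with hH
  have hHm : ∀ s, MeasurableSet[ℱ s] (H s) := fun s =>
    (hX.stronglyAdapted s).measurable measurableSet_Ici
  set lex : ℕ → ℕ → Prop := fun l j => e l < e j ∨ (e l = e j ∧ l < j) with hlex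
  set D : ℕ → ℕ → Set Ω := fun k j =>
    Eᶜ ∩ H (e j) ∩ ⋂ (l : ℕ) (_ : l ≤ k ∧ lex l j), (H (e l))ᶜ with hD
  have hlexle : ∀ l j, lex l j → e l ≤ e j := by
    intro l j h; rcases h with h | ⟨h, _⟩; exact h.le; exact h.le
  have hDm : ∀ k j, MeasurableSet[ℱ (e j)] (D k j) := by
    intro k j
    refine (((ℱ.mono (heuv j).1 _ hE).compl.inter (hHm (e j))).inter ?_)
    refine MeasurableSet.iInter fun l => MeasurableSet.iInter fun hl => ?_
    exact (ℱ.mono (hlexle l j hl.2) _ (hHm (e l))).compl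
  have hDm0 : ∀ k j, MeasurableSet (D k j) := fun k j => ℱ.le _ _ (hDm k j)
  have hDdis : ∀ k, (↑(Finset.range (k + 1)) : Set ℕ).PairwiseDisjoint (D k) := by
    intro k
    have haux : ∀ j j', j ≤ k → lex j j' → Disjoint (D k j) (D k j') := by
      intro j j' hjk hlexjj'
      rw [Set.disjoint_left]
      intro ω hω hω'
      have h1 : θ ≤ X (e j) ω := hω.1.2
      have h2 : ω ∈ (H (e j))ᶜ := by
        have := hω'.2
        simp only [Set.mem_iInter] at this
        exact this j ⟨hjk, hlexjj'⟩
      exact h2 h1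
    intro j hj j' hj' hne'
    simp only [Finset.coe_range, Set.mem_Iio] at hj hj'
    have : lex j j' ∨ lex j' j := by
      rcases lt_trichotomy (e j) (e j') with h | h | h
      · exact Or.inl (Or.inl h)
      · rcases lt_trichotomy j j' with h' | h' | h'
        · exact Or.inl (Or.inr ⟨h, h'⟩)
        · exact absurd h' hne'
        · exact Or.inr (Or.inr ⟨h.symm, h'⟩)
      · exact Or.inr (Or.inl h)
    rcases this with h | h
    · exact haux j j' (by omega) h
    · exact (haux j' j (by omega) h).symm
  have hcover : ∀ k, Eᶜ ∩ {ω | ∃ l ≤ k, θ ≤ X (e l) ω}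
      = ⋃ j ∈ Finset.range (k + 1), D k j := by
    intro k
    apply Set.Subset.antisymm
    · rintro ω ⟨hωE, l₀, hl₀k, hl₀⟩
      set F := (Finset.range (k + 1)).filter (fun j => θ ≤ X (e j) ω) with hF
      have hFne : F.Nonempty := ⟨l₀, by simp [hF, Finset.mem_filter, Nat.lt_succ_iff, hl₀k, hl₀]⟩
      obtain ⟨j₁, hj₁F, hj₁min⟩ := F.exists_min_image e hFne
      set F' := F.filter (fun j => e j = e j₁) with hF'
      have hF'ne : F'.Nonempty := ⟨j₁, by simp [hF', hj₁F]⟩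
      set j₀ := F'.min' hF'ne with hj₀
      have hj₀F' : j₀ ∈ F' := F'.min'_mem hF'ne
      have hj₀F : j₀ ∈ F := (Finset.mem_filter.mp hj₀F').1
      have hej₀ : e j₀ = e j₁ := (Finset.mem_filter.mp hj₀F').2
      have hj₀k : j₀ ∈ Finset.range (k + 1) := (Finset.mem_filter.mp hj₀F).1
      refine Set.mem_biUnion hj₀k ?_
      refine ⟨⟨hωE, (Finset.mem_filter.mp hj₀F).2⟩, ?_⟩
      simp only [Set.mem_iInter]
      rintro l ⟨hlk, hlexl⟩
      intro hl  -- hl : ω ∈ H (e l), derive contradiction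
      have hlF : l ∈ F := Finset.mem_filter.mpr ⟨Finset.mem_range.mpr (Nat.lt_succ_of_le hlk), hl⟩
      rcases hlexl with h | ⟨h, h'⟩
      · have h2 := hj₁min l hlF
        rw [← hej₀] at h2; exact absurd h2 (not_le.mpr h)
      · have : l ∈ F' := Finset.mem_filter.mpr ⟨hlF, by rw [h, hej₀]⟩
        exact absurd (F'.min'_le l this) (by omega)
    · intro ω hω
      simp only [Set.mem_iUnion] at hω
      obtain ⟨j, hj, hωD⟩ := hω
      exact ⟨hωD.1.1, j, Nat.lt_succ_iff.mp (Finset.mem_range.mp hj), hωD.1.2⟩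
  have hint : Integrable (G v) μ := hG.integrable v
  set B : ℕ → Set Ω := fun k => Eᶜ ∩ {ω | ∃ l ≤ k, θ ≤ X (e l) ω} with hB
  have hBm : ∀ k, MeasurableSet (B k) := by
    intro k; rw [hB]; simp only; rw [hcover k]
    exact Finset.measurableSet_biUnion _ (fun j _ => hDm0 k j)
  have key : ∀ k, κ * (μ (B k)).toReal ≤ ∫ ω in B k, G v ω ∂μ := by
    intro k
    simp only [hB]
    rw [hcover k]
    rw [measure_biUnion_finset (hDdis k) (fun j _ => hDm0 k j)]
    rw [integral_biUnion_finset _ (fun j _ => hDm0 k j) (hDdis k) (fun j _ => hint.integrableOn)]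
    rw [ENNReal.toReal_sum (fun j _ => measure_ne_top μ _), Finset.mul_sum]
    refine Finset.sum_le_sum fun j _ => ?_
    calc κ * (μ (D k j)).toReal ≤ ∫ ω in D k j, G (e j) ω ∂μ := by
          rw [mul_comm, ← smul_eq_mul]
          refine setIntegral_ge_of_const_le (hDm0 k j) (measure_ne_top μ _) ?_
            ((hG.integrable (e j)).integrableOn)
          intro ω hω; exact hκ (e j) ω hω.1.2
      _ ≤ ∫ ω in D k j, G v ω ∂μ := hG.setIntegral_le (heuv j).2 (hDm k j)
  have hBmono : Monotone B := by
    intro k k' hkk'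
    exact Set.inter_subset_inter_right _ (fun ω => fun ⟨l, hl, h⟩ => ⟨l, hl.trans hkk', h⟩)
  have hBU : (⋃ k, B k) = Eᶜ ∩ {ω | ∃ s ∈ Set.range e, θ ≤ X s ω} := by
    ext ω
    simp only [Set.mem_iUnion, hB, Set.mem_inter_iff, Set.mem_setOf_eq, Set.mem_compl_iff]
    constructor
    · rintro ⟨k, h1, l, _, h2⟩; exact ⟨h1, e l, mem_range_self l, h2⟩
    · rintro ⟨h1, s, ⟨l, rfl⟩, h2⟩; exact ⟨l, h1, l, le_rfl, h2⟩
  have hμt : Tendsto (fun k => (μ (B k)).toReal) atTop (𝓝 ((μ (⋃ k, B k)).toReal)) :=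
    (ENNReal.tendsto_toReal (measure_ne_top μ _)).comp (tendsto_measure_iUnion_atTop hBmono)
  have hIt : Tendsto (fun k => ∫ ω in B k, G v ω ∂μ) atTop (𝓝 (∫ ω in ⋃ k, B k, G v ω ∂μ)) :=
    tendsto_setIntegral_of_monotone hBm hBmono hint.integrableOn
  have := le_of_tendsto_of_tendsto' (hμt.const_mul κ) hIt key
  rwa [hBU] at this

lemma key_grid [IsProbabilityMeasure μ]
    (x₀ : ℝ) (n : ℕ) (hn : 1 ≤ n)
    (t : ℕ → ℝ) (ht0 : t 0 = 0) (htmono : ∀ i < n, t i ≤ t (i + 1))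
    (ζ : ℕ → ℝ → ℝ) (hζ : memZ x₀ n ζ)
    (hX : Submartingale X ℱ μ)
    (m : ℝ) (hm : x₀ < m) (δ : ℝ) (hδ : 0 < δ) :
    (1 - δ / (m - ζ n m)) *
        (μ {ω | ∃ s ∈ Qset t n ∩ Set.Icc 0 (t n), m - δ ≤ X s ω}).toReal
      ≤ UBsum μ X t n ζ m := by
  have tmono : ∀ i j, i ≤ j → j ≤ n → t i ≤ t j := by
    intro i j hij hjn
    induction j, hij using Nat.le_induction with
    | base => exact le_rfl
    | succ j hij ih => exact le_trans (ih (by omega)) (htmono j (by omega))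
  have t0le : ∀ i, i ≤ n → 0 ≤ t i := fun i hi => ht0 ▸ tmono 0 i (Nat.zero_le i) hi
  have tQ : ∀ i, i ≤ n → t i ∈ Qset t n := fun i hi => Or.inr ⟨i, hi, rfl⟩
  have hζmono : ∀ i j, 1 ≤ i → i ≤ j → j ≤ n → ζ i m ≤ ζ j m := by
    intro i j h1 hij hjn
    induction j, hij using Nat.le_induction with
    | base => exact le_rfl
    | succ j hij ih => exact le_trans (ih (by omega)) (hζ.2.1 j (by omega) (by omega) m hm)
  have hζn : ζ n m < m := hζ.2.2 m hm
  set c : ℝ := m - ζ n m with hc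
  have hcpos : 0 < c := sub_pos.2 hζn
  have hci : ∀ i, 1 ≤ i → i ≤ n → c ≤ m - ζ i m := by
    intro i h1 h2; have := hζmono i n h1 h2 le_rfl; simp only [hc]; linarith
  have hζi : ∀ i, 1 ≤ i → i ≤ n → ζ i m < m := by
    intro i h1 h2; have := hci i h1 h2; linarith
  set κ : ℝ := 1 - δ / c with hκdef
  set f : ℕ → ℝ → ℝ := fun i x => ppart (x - ζ i m) / (m - ζ i m) with hf
  have hfnonneg : ∀ i, 1 ≤ i → i ≤ n → ∀ x, 0 ≤ f i x := by
    intro i h1 h2 x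
    apply div_nonneg (le_max_right _ _)
    have := hci i h1 h2; linarith
  have hfmono : ∀ i, 1 ≤ i → i ≤ n → Monotone (f i) := by
    intro i h1 h2 x y hxy
    have hd : 0 < m - ζ i m := lt_of_lt_of_le hcpos (hci i h1 h2)
    exact (div_le_div_iff_of_pos_right hd).mpr (max_le_max (by linarith) le_rfl)
  have hfhit : ∀ i, 1 ≤ i → i ≤ n → ∀ x, m - δ ≤ x → κ ≤ f i x := by
    intro i h1 h2 x hx
    have hd : 0 < m - ζ i m := lt_of_lt_of_le hcpos (hci i h1 h2)
    have h3 : (m - δ - ζ i m) / (m - ζ i m) ≤ f i x := by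
      refine le_trans ?_ (hfmono i h1 h2 hx)
      exact (div_le_div_iff_of_pos_right hd).mpr (le_max_left _ _)
    have h4 : (m - δ - ζ i m) / (m - ζ i m) = 1 - δ / (m - ζ i m) := by
      have e : m - δ - ζ i m = (m - ζ i m) - δ := by ring
      rw [e, sub_div, div_self hd.ne']
    have h5 : δ / (m - ζ i m) ≤ δ / c := by
      apply div_le_div_of_nonneg_left hδ.le hcpos (hci i h1 h2)
    rw [h4] at h3
    simp only [hκdef]; linarith
  have hfanti : ∀ i, 1 ≤ i → i < n → ∀ x, x < m → f (i + 1) x ≤ f i x := by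
    intro i h1 h2 x hx
    have ha : ζ i m ≤ ζ (i + 1) m := hζ.2.1 i h1 h2 m hm
    have hb : ζ (i + 1) m < m := hζi (i + 1) (by omega) (by omega)
    have hb' : ζ i m < m := hζi i h1 (by omega)
    simp only [hf, ppart]
    rcases le_or_gt x (ζ (i + 1) m) with h | h
    · have : max (x - ζ (i + 1) m) 0 = 0 := max_eq_right (by linarith)
      rw [this]
      exact div_nonneg (le_max_right _ _) (by linarith) |>.trans' (by simp)
    · have e1 : max (x - ζ (i + 1) m) 0 = x - ζ (i + 1) m := max_eq_left (by linarith)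
      have e2 : max (x - ζ i m) 0 = x - ζ i m := max_eq_left (by linarith)
      rw [e1, e2, div_le_div_iff₀ (by linarith) (by linarith)]
      nlinarith
  -- integrability
  have hfint : ∀ i s, Integrable (fun ω => f i (X s ω)) μ := by
    intro i s
    have h1 : Integrable (fun ω => X s ω - ζ i m) μ :=
      (hX.integrable s).sub (integrable_const _)
    have h2 := h1.pos_part
    simpa [hf, ppart, div_eq_mul_inv] using h2.mul_const (m - ζ i m)⁻¹
  -- submartingale property of f i ∘ X
  have hGsub : ∀ i, 1 ≤ i → i ≤ n → Submartingale (fun s ω => f i (X s ω)) ℱ μ := by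
    intro i h1i h2i
    have hd : (0:ℝ) ≤ (m - ζ i m)⁻¹ :=
      inv_nonneg.mpr (le_of_lt (lt_of_lt_of_le hcpos (hci i h1i h2i)))
    set g : ℝ → Ω → ℝ := X - fun _ _ => ζ i m with hg
    have h1 : Submartingale g ℱ μ := hX.sub_martingale (martingale_const ℱ μ _)
    have h2 := Submartingale.smul_nonneg hd h1.pos
    convert h2 using 1
    · rfl
    funext s ω
    simp only [Pi.smul_apply, Pi.posPart_apply, hg, Pi.sub_apply, posPart_def,
      Pi.sup_apply, Pi.zero_apply, smul_eq_mul, hf, ppart, div_eq_inv_mul]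
  -- events
  set C : ℕ → Set Ω := fun i => {ω | ∃ s ∈ Qset t n ∩ Set.Icc 0 (t i), m - δ ≤ X s ω}
    with hC
  have hCm : ∀ i, i ≤ n → MeasurableSet[ℱ (t i)] (C i) := by
    intro i hi
    have : C i = ⋃ (s : ℝ) (_ : s ∈ Qset t n ∩ Set.Icc 0 (t i)), {ω | m - δ ≤ X s ω} := by
      ext ω; simp [hC]
    rw [this]
    refine MeasurableSet.biUnion ((Qset_countable t n).mono inter_subset_left) ?_
    intro s hs
    exact ℱ.mono hs.2.2 _ ((hX.stronglyAdapted s).measurable measurableSet_Ici)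
  have hCm0 : ∀ i, i ≤ n → MeasurableSet (C i) := fun i hi => ℱ.le _ _ (hCm i hi)
  have hCmono : ∀ i j, i ≤ j → j ≤ n → C i ⊆ C j := by
    intro i j hij hjn ω ⟨s, hs, hsm⟩
    exact ⟨s, ⟨hs.1, hs.2.1, le_trans hs.2.2 (tmono i j hij hjn)⟩, hsm⟩
  -- the inductive claim
  have claim : ∀ i, 1 ≤ i → i ≤ n →
      κ * (μ (C i)).toReal + ∫ ω in (C i)ᶜ, f i (X (t i) ω) ∂μ
        ≤ (∫ ω, f 1 (X (t 1) ω) ∂μ)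
          + ∑ j ∈ Finset.Ico 1 i,
              ((∫ ω, f (j + 1) (X (t (j + 1)) ω) ∂μ) - ∫ ω, f (j + 1) (X (t j) ω) ∂μ) := by
    intro i h1 h2
    induction i, h1 using Nat.le_induction with
    | base =>
      simp only [Finset.Ico_self, Finset.sum_empty, add_zero]
      have hsplit : (∫ ω, f 1 (X (t 1) ω) ∂μ)
          = (∫ ω in C 1, f 1 (X (t 1) ω) ∂μ) + ∫ ω in (C 1)ᶜ, f 1 (X (t 1) ω) ∂μ :=
        (integral_add_compl (hCm0 1 hn) (hfint 1 (t 1))).symm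
      have hblock := block_ineq hX (hGsub 1 le_rfl hn)
        (fun s ω h => hfhit 1 le_rfl hn (X s ω) h)
        (u := 0) (v := t 1)
        (S := Qset t n ∩ Set.Icc 0 (t 1))
        ((Qset_countable t n).mono inter_subset_left)
        (fun s hs => ⟨hs.2.1, hs.2.2⟩)
        (E := ∅) (@MeasurableSet.empty Ω (ℱ 0))
      simp only [Set.compl_empty, Set.univ_inter] at hblock
      -- hblock : κ * (μ (C 1)).toReal ≤ ∫ in C 1, f 1 (X (t 1))
      rw [hsplit]
      have : κ * (μ (C 1)).toReal ≤ ∫ ω in C 1, f 1 (X (t 1) ω) ∂μ := hblock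
      linarith
    | succ i hi ih =>
      have hin : i ≤ n := by omega
      have hIH := ih hin
      set A := C i with hA
      set W := (C i)ᶜ ∩ {ω | ∃ s ∈ Qset t n ∩ Set.Ioc (t i) (t (i + 1)), m - δ ≤ X s ω}
        with hW
      have hWm : MeasurableSet W := by
        refine (hCm0 i hin).compl.inter ?_
        have : {ω | ∃ s ∈ Qset t n ∩ Set.Ioc (t i) (t (i + 1)), m - δ ≤ X s ω}
            = ⋃ (s : ℝ) (_ : s ∈ Qset t n ∩ Set.Ioc (t i) (t (i + 1))), {ω | m - δ ≤ X s ω} := by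
          ext ω; simp
        rw [this]
        refine MeasurableSet.biUnion ((Qset_countable t n).mono inter_subset_left) ?_
        intro s hs
        exact ℱ.le s _ ((hX.stronglyAdapted s).measurable measurableSet_Ici)
      -- decomposition C (i+1) = C i ∪ W
      have hdecomp : C (i + 1) = C i ∪ W := by
        apply Set.Subset.antisymm
        · rintro ω ⟨s, ⟨hsQ, hs0, hsle⟩, hsm⟩
          by_cases hωA : ω ∈ C i
          · exact Or.inl hωA
          · refine Or.inr ⟨hωA, s, ⟨hsQ, ?_, hsle⟩, hsm⟩
            by_contra hlt
            push_neg at hlt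
            exact hωA ⟨s, ⟨hsQ, hs0, hlt⟩, hsm⟩
        · rintro ω (hω | ⟨hω1, s, ⟨hsQ, hs1, hs2⟩, hsm⟩)
          · exact hCmono i (i + 1) (by omega) (by omega) hω
          · exact ⟨s, ⟨hsQ, le_trans (t0le i hin) hs1.le, hs2⟩, hsm⟩
      have hdisj : Disjoint (C i) W := by
        rw [Set.disjoint_left]; intro ω hω hω'; exact hω'.1 hω
      have hμdecomp : (μ (C (i + 1))).toReal = (μ (C i)).toReal + (μ W).toReal := by
        rw [hdecomp, measure_union hdisj hWm, ENNReal.toReal_add (measure_ne_top μ _)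
          (measure_ne_top μ _)]
      -- block inequality for W
      have hblock := block_ineq hX (hGsub (i + 1) (by omega) (by omega))
        (fun s ω h => hfhit (i + 1) (by omega) (by omega) (X s ω) h)
        (u := t i) (v := t (i + 1))
        (S := Qset t n ∩ Set.Ioc (t i) (t (i + 1)))
        ((Qset_countable t n).mono inter_subset_left)
        (fun s hs => ⟨hs.2.1.le, hs.2.2⟩)
        (E := C i) (hCm i hin)
      -- submartingale step on A
      have hstep : ∫ ω in A, f (i + 1) (X (t i) ω) ∂μ
          ≤ ∫ ω in A, f (i + 1) (X (t (i + 1)) ω) ∂μ :=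
        (hGsub (i + 1) (by omega) (by omega)).setIntegral_le (tmono i (i + 1) (by omega) (by omega)) (hCm i hin)
      -- comparison on Aᶜ
      have hcomp : ∫ ω in Aᶜ, f (i + 1) (X (t i) ω) ∂μ ≤ ∫ ω in Aᶜ, f i (X (t i) ω) ∂μ := by
        refine setIntegral_mono_on ((hfint (i + 1) (t i)).integrableOn)
          ((hfint i (t i)).integrableOn) (hCm0 i hin).compl ?_
        intro ω hω
        have hXlt : X (t i) ω < m - δ := by
          by_contra hge
          push_neg at hge
          exact hω ⟨t i, ⟨tQ i hin, t0le i hin, le_rfl⟩, hge⟩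
        exact hfanti i hi (by omega) _ (by linarith)
      -- splitting the full integral at time t i and t (i+1)
      have hsplit1 : (∫ ω, f (i + 1) (X (t i) ω) ∂μ)
          = (∫ ω in A, f (i + 1) (X (t i) ω) ∂μ) + ∫ ω in Aᶜ, f (i + 1) (X (t i) ω) ∂μ :=
        (integral_add_compl (hCm0 i hin) (hfint (i + 1) (t i))).symm
      have hsplit2 : (∫ ω, f (i + 1) (X (t (i + 1)) ω) ∂μ)
          = (∫ ω in A, f (i + 1) (X (t (i + 1)) ω) ∂μ)
            + ∫ ω in Aᶜ, f (i + 1) (X (t (i + 1)) ω) ∂μ :=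
        (integral_add_compl (hCm0 i hin) (hfint (i + 1) (t (i + 1)))).symm
      -- Aᶜ = C(i+1)ᶜ ∪ W  (disjoint)
      have hAc : (Aᶜ : Set Ω) = (C (i + 1))ᶜ ∪ W := by
        rw [hdecomp, Set.compl_union]
        apply Set.Subset.antisymm
        · intro ω hω
          by_cases hωW : ω ∈ W
          · exact Or.inr hωW
          · exact Or.inl ⟨hω, hωW⟩
        · rintro ω (hω | hω)
          · exact hω.1
          · exact hω.1
      have hdisj2 : Disjoint ((C (i + 1))ᶜ : Set Ω) W := by
        rw [Set.disjoint_left]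
        intro ω hω hωW
        exact hω (hdecomp ▸ Or.inr hωW)
      have hsplit3 : ∫ ω in Aᶜ, f (i + 1) (X (t (i + 1)) ω) ∂μ
          = (∫ ω in (C (i + 1))ᶜ, f (i + 1) (X (t (i + 1)) ω) ∂μ)
            + ∫ ω in W, f (i + 1) (X (t (i + 1)) ω) ∂μ := by
        rw [hAc]
        exact setIntegral_union hdisj2 hWm ((hfint _ _).integrableOn) ((hfint _ _).integrableOn)
      -- assemble
      rw [Finset.sum_Ico_succ_top (a := 1) (b := i) (by omega)]
      have hblock' : κ * (μ W).toReal ≤ ∫ ω in W, f (i + 1) (X (t (i + 1)) ω) ∂μ := hblock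
      rw [hμdecomp]
      linarith [hIH]
  -- final assembly: claim at i = n, drop the nonnegative set integral
  have hfinal := claim n hn le_rfl
  have hnonneg : 0 ≤ ∫ ω in (C n)ᶜ, f n (X (t n) ω) ∂μ :=
    setIntegral_nonneg (hCm0 n le_rfl).compl (fun ω _ => hfnonneg n hn le_rfl _)
  have hUB : UBsum μ X t n ζ m
      = (∫ ω, f 1 (X (t 1) ω) ∂μ)
        + ∑ j ∈ Finset.Ico 1 n,
            ((∫ ω, f (j + 1) (X (t (j + 1)) ω) ∂μ) - ∫ ω, f (j + 1) (X (t j) ω) ∂μ) := by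
    rw [UBsum]
    have hlam : ∀ i ∈ Finset.Icc 1 n, (∫ ω, lam n ζ m i (X (t i) ω) ∂μ)
        = (∫ ω, f i (X (t i) ω) ∂μ) - (if i < n then ∫ ω, f (i + 1) (X (t i) ω) ∂μ else 0) := by
      intro i hi
      by_cases h : i < n
      · simp only [lam, h, if_true]
        exact integral_sub (hfint i (t i)) (hfint (i + 1) (t i))
      · simp only [lam, h, if_false, sub_zero]
        rfl
    rw [Finset.sum_congr rfl hlam]
    exact telescope_sum _ _ n hn
  rw [hUB]
  calc κ * (μ (C n)).toReal
      ≤ κ * (μ (C n)).toReal + ∫ ω in (C n)ᶜ, f n (X (t n) ω) ∂μ := by linarith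
    _ ≤ _ := hfinal

lemma per_m [IsProbabilityMeasure μ]
    (x₀ : ℝ) (n : ℕ) (hn : 1 ≤ n)
    (t : ℕ → ℝ) (ht0 : t 0 = 0) (htmono : ∀ i < n, t i ≤ t (i + 1))
    (ζ : ℕ → ℝ → ℝ) (hζ : memZ x₀ n ζ)
    (hX : Submartingale X ℱ μ)
    (m : ℝ) (hm : x₀ < m) :
    μ {ω | ∀ k : ℕ, ∃ s ∈ Qset t n, m - 1 / (k + 1) < X s ω}
      ≤ ENNReal.ofReal (UBsum μ X t n ζ m) := by
  set G := {ω | ∀ k : ℕ, ∃ s ∈ Qset t n, m - 1 / (k + 1) < X s ω} with hG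
  have tmono : ∀ i j, i ≤ j → j ≤ n → t i ≤ t j := by
    intro i j hij hjn
    induction j, hij using Nat.le_induction with
    | base => exact le_rfl
    | succ j hij ih => exact le_trans (ih (by omega)) (htmono j (by omega))
  have t0le : ∀ i, i ≤ n → 0 ≤ t i := fun i hi => ht0 ▸ tmono 0 i (Nat.zero_le i) hi
  have Qsub : Qset t n ⊆ Set.Icc 0 (t n) := by
    intro s hs
    rcases hs with hs | ⟨i, hi, rfl⟩
    · exact hs.2
    · exact ⟨t0le i hi, tmono i n hi le_rfl⟩
  have hζn : ζ n m < m := hζ.2.2 m hm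
  set c : ℝ := m - ζ n m with hc
  have hcpos : 0 < c := sub_pos.2 hζn
  -- main bound in ℝ
  have main : (μ G).toReal ≤ UBsum μ X t n ζ m := by
    refine le_of_forall_pos_le_add fun ε hε => ?_
    set a : ℝ := min ε 1 / 2 with ha
    have hapos : 0 < a := by positivity
    have haε : a ≤ ε := le_trans (by simp [ha]; linarith [min_le_left ε 1]) le_rfl
    have ha1 : a ≤ 1 / 2 := by simp [ha]; linarith [min_le_right ε 1]
    set δ : ℝ := c * a with hδdef
    have hδ : 0 < δ := mul_pos hcpos hapos
    have hκ : 1 - δ / c = 1 - a := by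
      rw [hδdef, mul_comm, mul_div_assoc, div_self hcpos.ne', mul_one]
    have hsub : G ⊆ {ω | ∃ s ∈ Qset t n ∩ Set.Icc 0 (t n), m - δ ≤ X s ω} := by
      intro ω hω
      obtain ⟨k, hk⟩ := exists_nat_one_div_lt hδ
      obtain ⟨s, hsQ, hsX⟩ := hω k
      exact ⟨s, ⟨hsQ, Qsub hsQ⟩, by push_cast at hk ⊢; linarith⟩
    have hkey := key_grid x₀ n hn t ht0 htmono ζ hζ hX m hm δ hδ
    rw [← hc, hκ] at hkey
    set p := (μ G).toReal with hp
    set q := (μ {ω | ∃ s ∈ Qset t n ∩ Set.Icc 0 (t n), m - δ ≤ X s ω}).toReal with hq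
    have hpq : p ≤ q := by
      apply ENNReal.toReal_mono (measure_ne_top μ _) (measure_mono hsub)
    have hq1 : q ≤ 1 := by
      rw [hq]
      have h := prob_le_one (μ := μ) (s := {ω | ∃ s ∈ Qset t n ∩ Set.Icc 0 (t n), m - δ ≤ X s ω})
      exact ENNReal.toReal_le_of_le_ofReal zero_le_one (by simpa using h)
    have hp0 : 0 ≤ p := ENNReal.toReal_nonneg
    -- (1 - a) * q ≤ UBsum
    nlinarith [hkey, hq1, hpq, hp0, hapos.le, haε]
  calc μ G = ENNReal.ofReal ((μ G).toReal) := (ENNReal.ofReal_toReal (measure_ne_top μ G)).symm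
    _ ≤ ENNReal.ofReal (UBsum μ X t n ζ m) := ENNReal.ofReal_le_ofReal main


end AuxiliaryProof

/-- **Main Result, Part 1 (i)**: for every right-continuous nondecreasing `φ`
(encoded as a Stieltjes function), every `ζ ∈ 𝒵` and every càdlàg submartingale `X`
with `X_0 = X₀` a.s., one has `E[φ(X̄_T)] ≤ UB(X, φ, ζ) = φ(X₀) + UBtail`, both sides
taking values in `(-∞, ∞]` (here stated equivalently, after subtracting `φ(X₀)`,
as an inequality in `[0, ∞]`). -/
theorem main_result_part1_i
    {Ω : Type} [m0 : MeasurableSpace Ω] (μ : Measure Ω) [IsProbabilityMeasure μ]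
    (x₀ : ℝ) (n : ℕ) (hn : 1 ≤ n)
    (t : ℕ → ℝ) (ht0 : t 0 = 0) (htmono : ∀ i < n, t i ≤ t (i + 1))
    (φ : StieltjesFunction ℝ)
    (ζ : ℕ → ℝ → ℝ) (hζ : memZ x₀ n ζ)
    (ℱ : Filtration ℝ m0) (X : ℝ → Ω → ℝ)
    (hX : Submartingale X ℱ μ)
    (hcadlag : ∀ ω, IsCadlag fun s => X s ω)
    (hinit : ∀ᵐ ω ∂μ, X 0 ω = x₀) :
    (∫⁻ ω, ENNReal.ofReal (φ (runMax (fun s => X s ω) (t n)) - φ x₀) ∂μ)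
      ≤ UBtail μ X φ x₀ t n ζ := by

  have tmono : ∀ i j, i ≤ j → j ≤ n → t i ≤ t j := by
    intro i j hij hjn
    induction j, hij using Nat.le_induction with
    | base => exact le_rfl
    | succ j hij ih => exact le_trans (ih (by omega)) (htmono j (by omega))
  have hT0 : 0 ≤ t n := ht0 ▸ tmono 0 n (Nat.zero_le n) le_rfl
  have hXmeas : ∀ s, Measurable (X s) := fun s =>
    ((hX.stronglyAdapted s).measurable).mono (ℱ.le s) le_rfl
  -- the product set
  set Z : Set (Ω × ℝ) := {p | x₀ < p.2 ∧
    ∀ k : ℕ, ∃ s ∈ Qset t n, p.2 - 1 / (k + 1) < X s p.1} with hZ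
  have hZm : MeasurableSet Z := by
    have hzeq : Z = (Prod.snd ⁻¹' Set.Ioi x₀) ∩
        ⋂ k : ℕ, ⋃ (s : ℝ) (_ : s ∈ Qset t n),
          {p : Ω × ℝ | p.2 - 1 / ((k : ℝ) + 1) < X s p.1} := by
      ext p
      simp only [hZ, Set.mem_setOf_eq, Set.mem_inter_iff, Set.mem_preimage, Set.mem_Ioi,
        Set.mem_iInter, Set.mem_iUnion, exists_prop]
    rw [hzeq]
    refine (measurable_snd measurableSet_Ioi).inter (MeasurableSet.iInter fun k => ?_)
    refine MeasurableSet.biUnion (Qset_countable t n) fun s _ => ?_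
    have hmeas : Measurable fun p : Ω × ℝ => p.2 - 1 / ((k : ℝ) + 1) - X s p.1 :=
      (measurable_snd.sub measurable_const).sub ((hXmeas s).comp measurable_fst)
    have heq2 : {p : Ω × ℝ | p.2 - 1 / ((k : ℝ) + 1) < X s p.1}
        = (fun p : Ω × ℝ => p.2 - 1 / ((k : ℝ) + 1) - X s p.1) ⁻¹' (Set.Iio 0) := by
      ext p; simp [Set.mem_Iio, sub_neg]
    rw [heq2]
    exact hmeas measurableSet_Iio
  -- pointwise bound
  have hpoint : ∀ ω, ENNReal.ofReal (φ (runMax (fun s => X s ω) (t n)) - φ x₀)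
      ≤ φ.measure (Prod.mk ω ⁻¹' Z) := by
    intro ω
    set M := runMax (fun s => X s ω) (t n) with hM
    have heq : ENNReal.ofReal (φ M - φ x₀) = φ.measure (Set.Ioc x₀ M) := by
      rw [φ.measure_Ioc]
    rw [heq]
    refine measure_mono fun m hm => ?_
    obtain ⟨hm1, hm2⟩ := hm
    refine ⟨hm1, fun k => ?_⟩
    set ε : ℝ := 1 / ((k : ℝ) + 1) with hε
    have hεpos : 0 < ε := by positivity
    -- there is r in [0, t n] with X r ω > m - ε
    have hne : ((fun s => X s ω) '' Set.Icc 0 (t n)).Nonempty :=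
      ⟨X 0 ω, Set.mem_image_of_mem _ ⟨le_rfl, hT0⟩⟩
    have hex : ∃ r ∈ Set.Icc 0 (t n), m - ε < X r ω := by
      by_cases hbdd : BddAbove ((fun s => X s ω) '' Set.Icc 0 (t n))
      · have hlt : m - ε < sSup ((fun s => X s ω) '' Set.Icc 0 (t n)) :=
          lt_of_lt_of_le (by linarith) hm2
        obtain ⟨x, hx, hxlt⟩ := exists_lt_of_lt_csSup hne hlt
        obtain ⟨r, hr, rfl⟩ := hx
        exact ⟨r, hr, hxlt⟩
      · obtain ⟨x, hx, hxlt⟩ := not_bddAbove_iff.mp hbdd (m - ε)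
        obtain ⟨r, hr, rfl⟩ := hx
        exact ⟨r, hr, hxlt⟩
    obtain ⟨r, ⟨hr0, hrT⟩, hrX⟩ := hex
    rcases eq_or_lt_of_le hrT with hrT' | hrT'
    · exact ⟨t n, Or.inr ⟨n, Set.self_mem_Iic, rfl⟩, by rw [← hrT']; exact hrX⟩
    · -- use right-continuity to find a rational in (r, t n]
      have hrc := (hcadlag ω).1 r
      have hU : (fun s => X s ω) ⁻¹' Set.Ioi (m - ε) ∈ nhdsWithin r (Set.Ici r) :=
        hrc (Ioi_mem_nhds hrX)
      obtain ⟨η, hη, hball⟩ := Metric.mem_nhdsWithin_iff.mp hU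
      obtain ⟨q, hq1, hq2⟩ := exists_rat_btwn (lt_min (lt_add_of_pos_right r hη) hrT')
      have hqmem : (q : ℝ) ∈ Metric.ball r η ∩ Set.Ici r := by
        constructor
        · rw [Metric.mem_ball, Real.dist_eq, abs_lt]
          have := lt_min_iff.mp hq2
          constructor <;> [linarith; linarith [this.1]]
        · exact le_of_lt hq1
      have hqX : m - ε < X (q : ℝ) ω := hball hqmem
      have hqT : (q : ℝ) ≤ t n := le_of_lt (lt_of_lt_of_le hq2 (min_le_right _ _))
      exact ⟨(q : ℝ), Or.inl ⟨⟨q, rfl⟩, le_trans hr0 hq1.le, hqT⟩, hqX⟩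
  -- Tonelli
  calc (∫⁻ ω, ENNReal.ofReal (φ (runMax (fun s => X s ω) (t n)) - φ x₀) ∂μ)
      ≤ ∫⁻ ω, φ.measure (Prod.mk ω ⁻¹' Z) ∂μ := lintegral_mono hpoint
    _ = (μ.prod φ.measure) Z := (Measure.prod_apply hZm).symm
    _ = ∫⁻ m, μ ((fun ω => (ω, m)) ⁻¹' Z) ∂φ.measure := Measure.prod_apply_symm hZm
    _ ≤ ∫⁻ m, (Set.Ioi x₀).indicator
          (fun m => ENNReal.ofReal (UBsum μ X t n ζ m)) m ∂φ.measure := by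
        refine lintegral_mono fun m => ?_
        by_cases hm : x₀ < m
        · rw [Set.indicator_of_mem (Set.mem_Ioi.mpr hm)]
          have hsl : ((fun ω => (ω, m)) ⁻¹' Z)
              ⊆ {ω | ∀ k : ℕ, ∃ s ∈ Qset t n, m - 1 / (k + 1) < X s ω} :=
            fun ω hω => hω.2
          exact le_trans (measure_mono hsl)
            (per_m x₀ n hn t ht0 htmono ζ hζ hX m hm)
        · have hempty : ((fun ω => (ω, m)) ⁻¹' Z) = ∅ :=
            Set.eq_empty_iff_forall_notMem.mpr (fun ω hω => hm hω.1)
          rw [hempty]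
          simp
    _ = UBtail μ X φ x₀ t n ζ := by
        rw [lintegral_indicator measurableSet_Ioi]
        rfl
end
end

section
/- Let ξ = (ξ₁,…,ξₙ) be nondecreasing right-continuous functions and let X be an iterated Azéma–Yor type embedding based on ξ. Then for every m > X₀ with ξₙ(m) < m, almost surely 1{X̄_{tₙ} ≥ m} = Υₙ(X, m, ζ(m)), where ζᵢ(m) := min_{j≥i} ξⱼ(m) for i = 1,…,n. -/
open MeasureTheory Set Filter
open scoped ENNReal NNReal Classical

noncomputable section

/-- The pathwise quantity `Υₙ(ω, m, ζ)` of Obłój–Spoida–Touzi. -/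
def Ups (ω : ℝ → ℝ) (t : ℕ → ℝ) (n : ℕ) (m : ℝ) (ζ : ℕ → ℝ) : ℝ :=
  (∑ i ∈ Finset.Icc 1 n,
      (ppart (ω (t i) - ζ i) / (m - ζ i) +
        (if runMax ω (t (i - 1)) < m ∧ m ≤ runMax ω (t i) then
          (m - ω (t i)) / (m - ζ i) else 0)))
    -
  (∑ i ∈ Finset.Icc 1 (n - 1),
      (ppart (ω (t i) - ζ (i + 1)) / (m - ζ (i + 1)) +
        (if m ≤ runMax ω (t i) ∧ ζ (i + 1) ≤ ω (t i) then
          (ω (t (i + 1)) - ω (t i)) / (m - ζ (i + 1)) else 0)))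

/-- `B` is a standard one-dimensional Brownian motion started at `x₀` under `μ`:
measurable in each time, continuous paths, `B 0 = x₀`, independent increments, and
Gaussian increments `B u - B s ~ N(0, u - s)` for `0 ≤ s ≤ u`. -/
structure IsBrownianMotion {Ω : Type} [m0 : MeasurableSpace Ω] (μ : Measure Ω)
    (x₀ : ℝ) (B : ℝ → Ω → ℝ) : Prop where
  meas : ∀ u : ℝ, Measurable (B u)
  init : ∀ ω, B 0 ω = x₀
  cont : ∀ ω, Continuous fun u => B u ω
  indep : ∀ s : ℕ → ℝ, Monotone s → 0 ≤ s 0 →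
    ProbabilityTheory.iIndepFun (m := fun _ => (inferInstance : MeasurableSpace ℝ))
      (fun i ω => B (s (i + 1)) ω - B (s i) ω) μ
  gauss : ∀ s u : ℝ, 0 ≤ s → s ≤ u →
    μ.map (fun ω => B u ω - B s ω) =
      ProbabilityTheory.gaussianReal 0 (Real.toNNReal (u - s))

/-- One step of the iterated Azéma–Yor construction: the first time after `s` at which
the path `f` is at or below the boundary `ξ` applied to its running maximum (provided
`f` is strictly above the boundary at time `s`; otherwise time `s` itself). -/
def hitTau (f : ℝ → ℝ) (ξ : ℝ → ℝ) (s : ℝ) : ℝ :=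
  if ξ (runMax f s) < f s then
    sInf {u : ℝ | s ≤ u ∧ f u ≤ ξ (runMax f u)}
  else s

/-- The iterated Azéma–Yor stopping times `τ₀ = 0`, `τᵢ` for a path `f` and
boundaries `ξ₁, …`. -/
def iterTau (f : ℝ → ℝ) (ξ : ℕ → ℝ → ℝ) : ℕ → ℝ
  | 0 => 0
  | (i + 1) => hitTau f (ξ (i + 1)) (iterTau f ξ i)

/-- `X` is an iterated Azéma–Yor type embedding based on the boundaries `ξ`:
`X` is a continuous martingale (for some filtration) and, for some Brownian motion `B`
started at `x₀` on the same space, `(X_{tᵢ}, X̄_{tᵢ}) = (B_{τᵢ}, B̄_{τᵢ})` a.s.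
for `i = 0, …, n`. -/
def IsIterAYEmbedding {Ω : Type} [m0 : MeasurableSpace Ω] (μ : Measure Ω)
    (x₀ : ℝ) (t : ℕ → ℝ) (n : ℕ) (ξ : ℕ → ℝ → ℝ) (X : ℝ → Ω → ℝ) : Prop :=
  (∃ ℱ : Filtration ℝ m0, Martingale X ℱ μ) ∧
  (∀ ω, Continuous fun s => X s ω) ∧
  ∃ B : ℝ → Ω → ℝ, IsBrownianMotion μ x₀ B ∧
    ∀ i ≤ n, ∀ᵐ ω ∂μ,
      X (t i) ω = B (iterTau (fun s => B s ω) ξ i) ω ∧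
      runMax (fun s => X s ω) (t i) =
        runMax (fun s => B s ω) (iterTau (fun s => B s ω) ξ i)

/-! ### Auxiliary lemmas -/

lemma ppart_of_nonneg {a : ℝ} (h : 0 ≤ a) : ppart a = a := max_eq_left h

lemma ppart_of_nonpos {a : ℝ} (h : a ≤ 0) : ppart a = 0 := max_eq_right h

section PathDeterministic

variable {f : ℝ → ℝ}

lemma image_Icc_nonempty {u : ℝ} (h0 : 0 ≤ u) : (f '' Set.Icc 0 u).Nonempty :=
  ⟨f 0, Set.mem_image_of_mem f (Set.left_mem_Icc.2 h0)⟩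

lemma runMax_mono (hf : Continuous f) {s u : ℝ} (h0 : 0 ≤ s) (hsu : s ≤ u) :
    runMax f s ≤ runMax f u :=
  csSup_le_csSup (isCompact_Icc.image hf).bddAbove (image_Icc_nonempty h0)
    (Set.image_mono (Set.Icc_subset_Icc_right hsu))

lemma le_runMax (hf : Continuous f) {s u : ℝ} (h0 : 0 ≤ s) (hsu : s ≤ u) :
    f s ≤ runMax f u :=
  le_csSup (isCompact_Icc.image hf).bddAbove ⟨s, ⟨h0, hsu⟩, rfl⟩

lemma runMax_le {u c : ℝ} (h0 : 0 ≤ u) (h : ∀ s, 0 ≤ s → s ≤ u → f s ≤ c) :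
    runMax f u ≤ c :=
  csSup_le (image_Icc_nonempty h0) (by rintro y ⟨s, hs, rfl⟩; exact h s hs.1 hs.2)

lemma runMax_zero (f : ℝ → ℝ) : runMax f 0 = f 0 := by
  simp [runMax, Set.Icc_self]

lemma exists_eq_runMax (hf : Continuous f) {u : ℝ} (h0 : 0 ≤ u) :
    ∃ w, 0 ≤ w ∧ w ≤ u ∧ f w = runMax f u := by
  obtain ⟨w, hw, hmax⟩ :=
    isCompact_Icc.exists_isMaxOn (Set.nonempty_Icc.2 h0) hf.continuousOn
  exact ⟨w, hw.1, hw.2, le_antisymm (le_runMax hf hw.1 hw.2)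
    (runMax_le h0 fun s hs1 hs2 => (isMaxOn_iff.1 hmax) s ⟨hs1, hs2⟩)⟩

lemma runMax_rightCont (hf : Continuous f) {u : ℝ} (h0 : 0 ≤ u) :
    ContinuousWithinAt (runMax f) (Set.Ici u) u := by
  rw [ContinuousWithinAt, tendsto_order]
  constructor
  · intro a ha
    filter_upwards [self_mem_nhdsWithin] with v hv
    exact ha.trans_le (runMax_mono hf h0 hv)
  · intro b hb
    obtain ⟨b', hb1, hb2⟩ := exists_between hb
    have hfu : f u < b' := (le_runMax hf h0 le_rfl).trans_lt hb1
    have hnb : {w : ℝ | f w < b'} ∈ nhds u :=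
      (isOpen_lt hf continuous_const).mem_nhds hfu
    obtain ⟨δ, hδ, hball⟩ := Metric.mem_nhds_iff.1 hnb
    filter_upwards [Ico_mem_nhdsGE (lt_add_of_pos_right u hδ)] with v hv
    have hv0 : (0:ℝ) ≤ v := h0.trans hv.1
    have hle : runMax f v ≤ max (runMax f u) b' := by
      refine runMax_le hv0 fun s hs1 hs2 => ?_
      rcases le_or_gt s u with h | h
      · exact le_max_of_le_left (le_runMax hf hs1 h)
      · refine le_max_of_le_right (le_of_lt (hball ?_))
        rw [Metric.mem_ball, Real.dist_eq, abs_of_pos (by linarith)]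
        have := hv.2
        linarith
    exact hle.trans_lt (max_lt hb hb2)

lemma xiRunMax_rightCont (hf : Continuous f) {ξ : ℝ → ℝ} (hξm : Monotone ξ)
    (hξrc : ∀ x : ℝ, ContinuousWithinAt ξ (Set.Ici x) x) {u : ℝ} (h0 : 0 ≤ u) :
    ContinuousWithinAt (fun v => ξ (runMax f v)) (Set.Ici u) u :=
  (hξrc (runMax f u)).comp (runMax_rightCont hf h0)
    (fun v hv => runMax_mono hf h0 hv)

lemma hitTau_spec (hf : Continuous f) (hlow : ∀ s c : ℝ, ∃ u, s ≤ u ∧ f u ≤ c)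
    {ξ : ℝ → ℝ} (hξm : Monotone ξ) (hξrc : ∀ x : ℝ, ContinuousWithinAt ξ (Set.Ici x) x)
    {s : ℝ} (hs : 0 ≤ s) :
    s ≤ hitTau f ξ s ∧ f (hitTau f ξ s) ≤ ξ (runMax f (hitTau f ξ s)) ∧
      ∀ u, s ≤ u → u < hitTau f ξ s → ξ (runMax f u) < f u := by
  unfold hitTau
  by_cases hc : ξ (runMax f s) < f s
  · rw [if_pos hc]
    set S := {u : ℝ | s ≤ u ∧ f u ≤ ξ (runMax f u)} with hSdef
    have hne : S.Nonempty := by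
      obtain ⟨u, hu1, hu2⟩ := hlow s (ξ (runMax f s))
      exact ⟨u, hu1, hu2.trans (hξm (runMax_mono hf hs hu1))⟩
    have hbd : BddBelow S := ⟨s, fun u hu => hu.1⟩
    have hτs : s ≤ sInf S := le_csInf hne fun u hu => hu.1
    have h0τ : (0:ℝ) ≤ sInf S := hs.trans hτs
    refine ⟨hτs, ?_, ?_⟩
    · have hcl : sInf S ∈ closure S := csInf_mem_closure hne hbd
      haveI hne2 : (nhdsWithin (sInf S) S).NeBot :=
        mem_closure_iff_nhdsWithin_neBot.1 hcl
      have hsub : S ⊆ Set.Ici (sInf S) := fun u hu => csInf_le hbd hu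
      have hg : ContinuousWithinAt (fun v => ξ (runMax f v)) S (sInf S) :=
        (xiRunMax_rightCont hf hξm hξrc h0τ).mono hsub
      have hfc : ContinuousWithinAt f S (sInf S) := hf.continuousAt.continuousWithinAt
      exact le_of_tendsto_of_tendsto hfc hg
        (eventually_mem_nhdsWithin.mono fun u hu => hu.2)
    · intro u hsu hu
      by_contra h
      push_neg at h
      exact absurd (csInf_le hbd ⟨hsu, h⟩) (not_le.2 hu)
  · rw [if_neg hc]
    exact ⟨le_rfl, not_lt.1 hc, fun u h1 h2 => absurd h1 (not_le.2 h2)⟩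

end PathDeterministic
section Core

lemma core (n : ℕ) (hn : 1 ≤ n) (m : ℝ) (x mM ζ : ℕ → ℝ)
    (hζmono : ∀ i, 1 ≤ i → i < n → ζ i ≤ ζ (i + 1))
    (hζnm : ζ n < m)
    (hM0 : mM 0 < m)
    (hMst : ∀ i, i < n → mM i ≤ mM (i + 1))
    (Q2 : ∀ i, 1 ≤ i → i < n → mM i < m → ζ i = ζ (i + 1) ∨ x i ≤ ζ i)
    (Q3 : mM n < m → x n ≤ ζ n)
    (Q4 : ∀ i, 1 ≤ i → i ≤ n → mM (i - 1) < m → m ≤ mM i → ζ i ≤ x i)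
    (Q5 : ∀ i, 1 ≤ i → i < n → m ≤ mM i → x i < ζ (i + 1) → x (i + 1) = x i)
    (Q6 : ∀ i, 1 ≤ i → i < n → m ≤ mM i → ζ (i + 1) ≤ x i → ζ (i + 1) ≤ x (i + 1)) :
    (if m ≤ mM n then (1 : ℝ) else 0) =
      (∑ i ∈ Finset.Icc 1 n, (ppart (x i - ζ i) / (m - ζ i) +
        (if mM (i - 1) < m ∧ m ≤ mM i then (m - x i) / (m - ζ i) else 0))) -
      (∑ i ∈ Finset.Icc 1 (n - 1), (ppart (x i - ζ (i + 1)) / (m - ζ (i + 1)) +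
        (if m ≤ mM i ∧ ζ (i + 1) ≤ x i then (x (i + 1) - x i) / (m - ζ (i + 1)) else 0))) := by
  classical
  set F : ℕ → ℝ := fun i => ppart (x i - ζ i) / (m - ζ i) +
    (if mM (i - 1) < m ∧ m ≤ mM i then (m - x i) / (m - ζ i) else 0) with hF
  set G : ℕ → ℝ := fun i => ppart (x i - ζ (i + 1)) / (m - ζ (i + 1)) +
    (if m ≤ mM i ∧ ζ (i + 1) ≤ x i then (x (i + 1) - x i) / (m - ζ (i + 1)) else 0) with hG
  have hMle : ∀ j, j ≤ n → ∀ i, i ≤ j → mM i ≤ mM j := by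
    intro j
    induction j with
    | zero => intro _ i hi; cases Nat.le_zero.1 hi; exact le_rfl
    | succ k ih =>
      intro hk i hi
      rcases eq_or_lt_of_le hi with rfl | h
      · exact le_rfl
      · exact (ih (Nat.le_of_succ_le hk) i (Nat.lt_succ_iff.1 h)).trans
          (hMst k (Nat.lt_of_succ_le hk))
  have hζle : ∀ j, j ≤ n → ∀ i, 1 ≤ i → i ≤ j → ζ i ≤ ζ j := by
    intro j
    induction j with
    | zero => intro _ i h1 h2; exact absurd (h1.trans h2) (by omega)
    | succ k ih =>
      intro hk i h1 h2
      rcases eq_or_lt_of_le h2 with rfl | h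
      · exact le_rfl
      · exact (ih (Nat.le_of_succ_le hk) i h1 (Nat.lt_succ_iff.1 h)).trans
          (hζmono k (h1.trans (Nat.lt_succ_iff.1 h)) (Nat.lt_of_succ_le hk))
  have hζlt : ∀ i, 1 ≤ i → i ≤ n → ζ i < m := fun i h1 h2 =>
    (hζle n le_rfl i h1 h2).trans_lt hζnm
  -- cancellation when the running max is below m
  have hFG : ∀ i, 1 ≤ i → i < n → mM i < m → F i = G i := by
    intro i h1 hin hMim
    rw [hF, hG]
    simp only []
    rw [if_neg (fun h => absurd h.2 (not_le.2 hMim)),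
        if_neg (fun (h : _ ∧ _) => absurd h.1 (not_le.2 hMim)), add_zero, add_zero]
    rcases Q2 i h1 hin hMim with h | h
    · rw [h]
    · rw [ppart_of_nonpos (sub_nonpos.2 h),
        ppart_of_nonpos (sub_nonpos.2 (h.trans (hζmono i h1 hin))), zero_div, zero_div]
  by_cases hcase : m ≤ mM n
  · -- the running maximum reaches m
    rw [if_pos hcase]
    have hex : ∃ i, m ≤ mM i := ⟨n, hcase⟩
    set k := Nat.find hex with hkdef
    have hk : m ≤ mM k := Nat.find_spec hex
    have hkmin : ∀ j, j < k → mM j < m := fun j hj => not_le.1 (Nat.find_min hex hj)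
    have hk1 : 1 ≤ k := by
      rcases Nat.eq_zero_or_pos k with h | h
      · rw [h] at hk; exact absurd hk (not_le.2 hM0)
      · exact h
    have hkn : k ≤ n := Nat.find_min' hex hcase
    have hkm1 : mM (k - 1) < m := hkmin _ (by omega)
    have e1 : Finset.Icc 1 n = Finset.Ico 1 (n + 1) := by rw [Finset.Ico_add_one_right_eq_Icc]
    have e2 : Finset.Icc 1 (n - 1) = Finset.Ico 1 n := by
      rw [← Finset.Ico_add_one_right_eq_Icc]
      congr 1
      omega
    rw [e1, e2, ← Finset.sum_Ico_consecutive F hk1 (Nat.le_succ_of_le hkn),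
      ← Finset.sum_Ico_consecutive G hk1 hkn,
      Finset.sum_eq_sum_Ico_succ_bot (Nat.lt_succ_of_le hkn) F,
      show k + 1 = k + 1 from rfl, ← Finset.sum_Ico_add' F k n 1]
    have hA : ∑ i ∈ Finset.Ico 1 k, F i = ∑ i ∈ Finset.Ico 1 k, G i := by
      refine Finset.sum_congr rfl fun i hi => ?_
      rw [Finset.mem_Ico] at hi
      exact hFG i hi.1 (lt_of_lt_of_le hi.2 hkn) (hkmin i hi.2)
    have hCD : ∑ i ∈ Finset.Ico k n, F (i + 1) = ∑ i ∈ Finset.Ico k n, G i := by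
      refine Finset.sum_congr rfl fun i hi => ?_
      rw [Finset.mem_Ico] at hi
      have h1i : 1 ≤ i := hk1.trans hi.1
      have hin : i < n := hi.2
      have hmi : m ≤ mM i := hk.trans (hMle i hin.le k hi.1)
      rw [hF, hG]
      simp only [Nat.add_sub_cancel]
      rw [if_neg (fun (h : _ ∧ _) => absurd h.1 (not_lt.2 hmi))]
      by_cases hxi : ζ (i + 1) ≤ x i
      · rw [if_pos ⟨hmi, hxi⟩, ppart_of_nonneg (sub_nonneg.2 hxi),
          ppart_of_nonneg (sub_nonneg.2 (Q6 i h1i hin hmi hxi)), add_zero, ← add_div]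
        congr 1
        ring
      · rw [if_neg (fun h => absurd h.2 hxi),
          ppart_of_nonpos (sub_nonpos.2 (not_le.1 hxi).le), zero_div, add_zero, add_zero,
          Q5 i h1i hin hmi (not_le.1 hxi),
          ppart_of_nonpos (sub_nonpos.2 (not_le.1 hxi).le), zero_div]
    have hFk : F k = 1 := by
      rw [hF]
      simp only []
      rw [if_pos ⟨hkm1, hk⟩, ppart_of_nonneg (sub_nonneg.2 (Q4 k hk1 hkn hkm1 hk)),
        ← add_div, show x k - ζ k + (m - x k) = m - ζ k by ring]
      exact div_self (sub_ne_zero.2 (hζlt k hk1 hkn).ne')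
    rw [hA, hCD, hFk]
    ring
  · -- the running maximum stays below m
    rw [if_neg hcase]
    push_neg at hcase
    have hMi : ∀ i, i ≤ n → mM i < m := fun i hi => (hMle n le_rfl i hi).trans_lt hcase
    obtain ⟨n', rfl⟩ : ∃ n', n = n' + 1 := ⟨n - 1, (Nat.succ_pred_eq_of_pos hn).symm⟩
    have htop : F (n' + 1) = 0 := by
      rw [hF]
      simp only []
      rw [if_neg (fun (h : _ ∧ _) => absurd h.2 (not_le.2 hcase)),
        ppart_of_nonpos (sub_nonpos.2 (Q3 hcase)), zero_div, add_zero]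
    have hsum : ∑ i ∈ Finset.Icc 1 n', F i = ∑ i ∈ Finset.Icc 1 n', G i := by
      refine Finset.sum_congr rfl fun i hi => ?_
      rw [Finset.mem_Icc] at hi
      exact hFG i hi.1 (Nat.lt_succ_of_le hi.2) (hMi i (Nat.le_succ_of_le hi.2))
    rw [Finset.sum_Icc_succ_top hn F, Nat.add_sub_cancel, htop, hsum]
    ring

end Core
section MainPath

lemma Ups_congr {ω₁ ω₂ : ℝ → ℝ} {t₁ t₂ : ℕ → ℝ} {n : ℕ} (hn : 1 ≤ n) {m : ℝ} {ζ : ℕ → ℝ}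
    (h : ∀ i, i ≤ n → ω₁ (t₁ i) = ω₂ (t₂ i))
    (h' : ∀ i, i ≤ n → runMax ω₁ (t₁ i) = runMax ω₂ (t₂ i)) :
    Ups ω₁ t₁ n m ζ = Ups ω₂ t₂ n m ζ := by
  unfold Ups
  congr 1
  · refine Finset.sum_congr rfl fun i hi => ?_
    rw [Finset.mem_Icc] at hi
    rw [h i hi.2, h' i hi.2, h' (i - 1) ((Nat.sub_le i 1).trans hi.2)]
  · refine Finset.sum_congr rfl fun i hi => ?_
    rw [Finset.mem_Icc] at hi
    have hin : i ≤ n := hi.2.trans (Nat.sub_le n 1)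
    have hin1 : i + 1 ≤ n := by omega
    rw [h i hin, h' i hin, h (i + 1) hin1]

lemma main_path (x₀ : ℝ) (n : ℕ) (hn : 1 ≤ n) (ξ : ℕ → ℝ → ℝ)
    (hξm : ∀ i ∈ Finset.Icc 1 n, Monotone (ξ i))
    (hξrc : ∀ i ∈ Finset.Icc 1 n, ∀ x : ℝ, ContinuousWithinAt (ξ i) (Set.Ici x) x)
    (f : ℝ → ℝ) (hf : Continuous f) (hf0 : f 0 = x₀)
    (hlow : ∀ s c : ℝ, ∃ u, s ≤ u ∧ f u ≤ c)
    (m : ℝ) (hm : x₀ < m) (hξnm : ξ n m < m)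
    (ζ : ℕ → ℝ) (hζn : ζ n = ξ n m)
    (hζstep : ∀ i, 1 ≤ i → i < n → ζ i = min (ξ i m) (ζ (i + 1))) :
    (if m ≤ runMax f (iterTau f ξ n) then (1 : ℝ) else 0) =
      Ups f (fun i => iterTau f ξ i) n m ζ := by
  have hmem : ∀ i, 1 ≤ i → i ≤ n → i ∈ Finset.Icc 1 n := fun i h1 h2 =>
    Finset.mem_Icc.2 ⟨h1, h2⟩
  have hmem1 : ∀ j, j < n → (j + 1) ∈ Finset.Icc 1 n := fun j hj =>
    Finset.mem_Icc.2 ⟨Nat.succ_le_succ (Nat.zero_le _), hj⟩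
  have htaunn : ∀ i, i ≤ n → 0 ≤ iterTau f ξ i := by
    intro i
    induction i with
    | zero => intro _; exact le_rfl
    | succ j ih =>
      intro h
      have hj := ih (Nat.le_of_succ_le h)
      exact hj.trans (hitTau_spec hf hlow (hξm (j + 1) (hmem1 j h))
        (hξrc (j + 1) (hmem1 j h)) hj).1
  have hspec : ∀ j, j < n →
      (iterTau f ξ j ≤ iterTau f ξ (j + 1) ∧
        f (iterTau f ξ (j + 1)) ≤ ξ (j + 1) (runMax f (iterTau f ξ (j + 1))) ∧
        ∀ u, iterTau f ξ j ≤ u → u < iterTau f ξ (j + 1) → ξ (j + 1) (runMax f u) < f u) :=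
    fun j hj => hitTau_spec hf hlow (hξm _ (hmem1 j hj)) (hξrc _ (hmem1 j hj)) (htaunn j hj.le)
  have htaumono : ∀ i, i < n → iterTau f ξ i ≤ iterTau f ξ (i + 1) := fun i hi => (hspec i hi).1
  have hP2 : ∀ i, 1 ≤ i → i ≤ n → f (iterTau f ξ i) ≤ ξ i (runMax f (iterTau f ξ i)) := by
    intro i h1 h2
    obtain ⟨j, rfl⟩ : ∃ j, i = j + 1 := ⟨i - 1, (Nat.succ_pred_eq_of_pos h1).symm⟩
    exact (hspec j h2).2.1
  have hζleξ : ∀ i, 1 ≤ i → i ≤ n → ζ i ≤ ξ i m := by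
    intro i h1 h2
    rcases eq_or_lt_of_le h2 with rfl | h
    · exact le_of_eq hζn
    · rw [hζstep i h1 h]; exact min_le_left _ _
  have hζmono' : ∀ i, 1 ≤ i → i < n → ζ i ≤ ζ (i + 1) := fun i h1 h2 => by
    rw [hζstep i h1 h2]; exact min_le_right _ _
  have hζle' : ∀ j, j ≤ n → ∀ i, 1 ≤ i → i ≤ j → ζ i ≤ ζ j := by
    intro j
    induction j with
    | zero => intro _ i h1 h2; exact absurd (h1.trans h2) (by omega)
    | succ k ih =>
      intro hk i h1 h2
      rcases eq_or_lt_of_le h2 with rfl | h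
      · exact le_rfl
      · exact (ih (Nat.le_of_succ_le hk) i h1 (Nat.lt_succ_iff.1 h)).trans
          (hζmono' k (h1.trans (Nat.lt_succ_iff.1 h)) (Nat.lt_of_succ_le hk))
  have hζnm' : ζ n < m := lt_of_le_of_lt (le_of_eq hζn) hξnm
  have hζlt : ∀ i, 1 ≤ i → i ≤ n → ζ i < m := fun i h1 h2 =>
    (hζle' n le_rfl i h1 h2).trans_lt hζnm'
  have hM0 : runMax f (iterTau f ξ 0) < m := by
    have h0 : iterTau f ξ 0 = 0 := rfl
    rw [h0, runMax_zero, hf0]; exact hm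
  have hMst : ∀ i, i < n → runMax f (iterTau f ξ i) ≤ runMax f (iterTau f ξ (i + 1)) :=
    fun i hi => runMax_mono hf (htaunn i hi.le) (htaumono i hi)
  have hQ2 : ∀ i, 1 ≤ i → i < n → runMax f (iterTau f ξ i) < m →
      ζ i = ζ (i + 1) ∨ f (iterTau f ξ i) ≤ ζ i := by
    intro i h1 h2 hMi
    rcases le_total (ξ i m) (ζ (i + 1)) with h | h
    · right
      calc f (iterTau f ξ i) ≤ ξ i (runMax f (iterTau f ξ i)) := hP2 i h1 h2.le
        _ ≤ ξ i m := hξm i (hmem i h1 h2.le) hMi.le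
        _ = ζ i := by rw [hζstep i h1 h2, min_eq_left h]
    · left; rw [hζstep i h1 h2, min_eq_right h]
  have hQ3 : runMax f (iterTau f ξ n) < m → f (iterTau f ξ n) ≤ ζ n := by
    intro h
    rw [hζn]
    exact (hP2 n hn le_rfl).trans (hξm n (hmem n hn le_rfl) h.le)
  have hQ4 : ∀ i, 1 ≤ i → i ≤ n → runMax f (iterTau f ξ (i - 1)) < m →
      m ≤ runMax f (iterTau f ξ i) → ζ i ≤ f (iterTau f ξ i) := by
    intro i h1 hin hprev hcur
    obtain ⟨j, rfl⟩ : ∃ j, i = j + 1 := ⟨i - 1, (Nat.succ_pred_eq_of_pos h1).symm⟩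
    rw [Nat.add_sub_cancel] at hprev
    have hjn : j < n := hin
    by_cases hcond : ξ (j + 1) (runMax f (iterTau f ξ j)) < f (iterTau f ξ j)
    · by_cases hA : ∃ u, 0 ≤ u ∧ u < iterTau f ξ (j + 1) ∧ m ≤ runMax f u
      · obtain ⟨u, hu0, hult, hum⟩ := hA
        have huj : iterTau f ξ j ≤ u := by
          by_contra hcon
          push_neg at hcon
          exact absurd ((runMax_mono hf hu0 hcon.le).trans_lt hprev) (not_lt.2 hum)
        have hlim : Filter.Tendsto f
            (nhdsWithin (iterTau f ξ (j + 1)) (Set.Ico u (iterTau f ξ (j + 1))))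
            (nhds (f (iterTau f ξ (j + 1)))) :=
          (hf.tendsto _).mono_left nhdsWithin_le_nhds
        haveI : (nhdsWithin (iterTau f ξ (j + 1))
            (Set.Ico u (iterTau f ξ (j + 1)))).NeBot := by
          apply mem_closure_iff_nhdsWithin_neBot.1
          rw [closure_Ico (ne_of_lt hult)]
          exact ⟨hult.le, le_rfl⟩
        have hge : ξ (j + 1) m ≤ f (iterTau f ξ (j + 1)) := by
          refine ge_of_tendsto hlim ?_
          filter_upwards [eventually_mem_nhdsWithin] with v hv
          have h2 := (hspec j hjn).2.2 v (huj.trans hv.1) hv.2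
          have h3 : m ≤ runMax f v := hum.trans (runMax_mono hf hu0 hv.1)
          exact (hξm (j + 1) (hmem1 j hjn) h3).trans h2.le
        exact (hζleξ (j + 1) h1 hin).trans hge
      · push_neg at hA
        obtain ⟨w, hw0, hwle, hwmax⟩ := exists_eq_runMax hf (htaunn (j + 1) hin)
        rcases lt_or_eq_of_le hwle with hlt | heq
        · have hmf : m ≤ f w := by rw [hwmax]; exact hcur
          exact absurd (hA w hw0 hlt) (not_lt.2 (hmf.trans (le_runMax hf hw0 le_rfl)))
        · have hmf : m ≤ f (iterTau f ξ (j + 1)) := by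
            rw [heq] at hwmax; rw [hwmax]; exact hcur
          exact (hζlt (j + 1) h1 hin).le.trans hmf
    · exfalso
      have he : iterTau f ξ (j + 1) = iterTau f ξ j := by
        show hitTau f (ξ (j + 1)) (iterTau f ξ j) = iterTau f ξ j
        unfold hitTau
        rw [if_neg hcond]
      rw [he] at hcur
      exact absurd hcur (not_le.2 hprev)
  have hQ5 : ∀ i, 1 ≤ i → i < n → m ≤ runMax f (iterTau f ξ i) →
      f (iterTau f ξ i) < ζ (i + 1) → f (iterTau f ξ (i + 1)) = f (iterTau f ξ i) := by
    intro i h1 hin hmi hxi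
    have hcond : ¬ ξ (i + 1) (runMax f (iterTau f ξ i)) < f (iterTau f ξ i) := by
      have hle : f (iterTau f ξ i) ≤ ξ (i + 1) m :=
        hxi.le.trans (hζleξ (i + 1) (by omega) hin)
      exact not_lt.2 (hle.trans (hξm (i + 1) (hmem1 i hin) hmi))
    have he : iterTau f ξ (i + 1) = iterTau f ξ i := by
      show hitTau f (ξ (i + 1)) (iterTau f ξ i) = iterTau f ξ i
      unfold hitTau
      rw [if_neg hcond]
    rw [he]
  have hQ6 : ∀ i, 1 ≤ i → i < n → m ≤ runMax f (iterTau f ξ i) →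
      ζ (i + 1) ≤ f (iterTau f ξ i) → ζ (i + 1) ≤ f (iterTau f ξ (i + 1)) := by
    intro i h1 hin hmi hxi
    by_cases hcond : ξ (i + 1) (runMax f (iterTau f ξ i)) < f (iterTau f ξ i)
    · have hne : iterTau f ξ (i + 1) ≠ iterTau f ξ i := by
        intro he
        have h2 := (hspec i hin).2.1
        rw [he] at h2
        exact absurd hcond (not_lt.2 h2)
      have hlt : iterTau f ξ i < iterTau f ξ (i + 1) :=
        lt_of_le_of_ne (htaumono i hin) (Ne.symm hne)
      haveI : (nhdsWithin (iterTau f ξ (i + 1))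
          (Set.Ico (iterTau f ξ i) (iterTau f ξ (i + 1)))).NeBot := by
        apply mem_closure_iff_nhdsWithin_neBot.1
        rw [closure_Ico (ne_of_lt hlt)]
        exact ⟨hlt.le, le_rfl⟩
      have hlim : Filter.Tendsto f
          (nhdsWithin (iterTau f ξ (i + 1)) (Set.Ico (iterTau f ξ i) (iterTau f ξ (i + 1))))
          (nhds (f (iterTau f ξ (i + 1)))) :=
        (hf.tendsto _).mono_left nhdsWithin_le_nhds
      refine ge_of_tendsto hlim ?_
      filter_upwards [eventually_mem_nhdsWithin] with v hv
      have h2 := (hspec i hin).2.2 v hv.1 hv.2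
      have h3 : ξ (i + 1) m ≤ ξ (i + 1) (runMax f v) :=
        hξm (i + 1) (hmem1 i hin) (hmi.trans (runMax_mono hf (htaunn i hin.le) hv.1))
      exact (hζleξ (i + 1) (by omega) hin).trans (h3.trans h2.le)
    · have he : iterTau f ξ (i + 1) = iterTau f ξ i := by
        show hitTau f (ξ (i + 1)) (iterTau f ξ i) = iterTau f ξ i
        unfold hitTau
        rw [if_neg hcond]
      rw [he]
      exact hxi
  unfold Ups
  exact core n hn m (fun i => f (iterTau f ξ i)) (fun i => runMax f (iterTau f ξ i)) ζ
    hζmono' hζnm' hM0 hMst hQ2 hQ3 hQ4 hQ5 hQ6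

end MainPath
section Probabilistic

open ProbabilityTheory

/-- The standard gaussian gives positive mass to `Iic (-1)`. -/
lemma gaussian_Iic_pos : ProbabilityTheory.gaussianReal 0 1 (Set.Iic (-1 : ℝ)) ≠ 0 := by
  rw [ProbabilityTheory.gaussianReal_apply 0 one_ne_zero]
  intro h0
  rw [MeasureTheory.lintegral_eq_zero_iff (ProbabilityTheory.measurable_gaussianPDF 0 1)] at h0
  have h1 : ∀ᵐ x ∂(MeasureTheory.volume.restrict (Set.Iic (-1 : ℝ))), False :=
    h0.mono fun x hx => (ProbabilityTheory.gaussianPDF_pos 0 one_ne_zero x).ne' hx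
  have h2 : (MeasureTheory.volume.restrict (Set.Iic (-1 : ℝ))) {x : ℝ | ¬False} = 0 :=
    MeasureTheory.ae_iff.1 h1
  simp only [not_false_eq_true, Set.setOf_true] at h2
  rw [MeasureTheory.Measure.restrict_apply_univ] at h2
  simp [Real.volume_Iic] at h2

/-- Scaled gaussians dominate the standard one on suitable left tails. -/
lemma gaussian_tail_bound (c : ℕ) :
    ProbabilityTheory.gaussianReal 0 1 (Set.Iic (-1 : ℝ)) ≤
      ProbabilityTheory.gaussianReal 0 (Real.toNNReal (((c : ℝ) + 1) ^ 2))
        (Set.Iic (-(c : ℝ))) := by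
  have ha : (0:ℝ) < (c:ℝ) + 1 := by positivity
  have hmap := ProbabilityTheory.gaussianReal_map_const_mul (μ := 0) (v := 1) ((c:ℝ) + 1)
  have hv : NNReal.mk (((c:ℝ) + 1) ^ 2) (sq_nonneg _) * 1 = Real.toNNReal (((c : ℝ) + 1) ^ 2) := by
    apply NNReal.coe_injective
    simp [Real.coe_toNNReal _ (sq_nonneg ((c:ℝ) + 1))]
  rw [hv, mul_zero] at hmap
  rw [← hmap, MeasureTheory.Measure.map_apply (measurable_const_mul _) measurableSet_Iic]
  have hpre : ((fun x : ℝ => ((c:ℝ) + 1) * x) ⁻¹' Set.Iic (-(c:ℝ)))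
      = Set.Iic (-(c:ℝ) / ((c:ℝ) + 1)) := by
    ext x
    simp only [Set.mem_preimage, Set.mem_Iic]
    rw [le_div_iff₀ ha, mul_comm]
  rw [hpre]
  refine measure_mono fun x hx => ?_
  simp only [Set.mem_Iic] at hx ⊢
  have hd : (c:ℝ) / ((c:ℝ) + 1) ≤ 1 := by
    rw [div_le_one ha]; linarith
  have : (-1 : ℝ) ≤ -(c:ℝ) / ((c:ℝ) + 1) := by
    rw [neg_div]
    linarith
  linarith

lemma ae_low {Ω : Type} [m0 : MeasurableSpace Ω] (μ : Measure Ω) [IsProbabilityMeasure μ]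
    (x₀ : ℝ) (B : ℝ → Ω → ℝ) (hB : IsBrownianMotion μ x₀ B) :
    ∀ᵐ ω ∂μ, ∀ s c : ℝ, ∃ u, s ≤ u ∧ B u ω ≤ c := by
  classical
  have hsmono : Monotone (fun n : ℕ => (n : ℝ)) := fun a b h => Nat.cast_le.2 h
  have hs0 : (0:ℝ) ≤ (fun n : ℕ => (n : ℝ)) 0 := by simp
  set D : ℕ → Ω → ℝ := fun i ω => B (((i + 1 : ℕ) : ℝ)) ω - B ((i : ℕ) : ℝ) ω with hD
  have hindep : ProbabilityTheory.iIndepFun (m := fun _ => (inferInstance : MeasurableSpace ℝ)) D μ :=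
    hB.indep (fun n : ℕ => (n : ℝ)) hsmono hs0
  have hDmeas : ∀ i, Measurable (D i) := fun i => (hB.meas _).sub (hB.meas _)
  set 𝒢 : ℕ → MeasurableSpace Ω :=
    fun i => MeasurableSpace.comap (D i) (inferInstance : MeasurableSpace ℝ) with h𝒢
  have h_le : ∀ i, 𝒢 i ≤ m0 := fun i => (hDmeas i).comap_le
  have hiIndep : ProbabilityTheory.iIndep 𝒢 μ :=
    (ProbabilityTheory.iIndepFun_iff_iIndep _ _ _).1 hindep
  -- telescoping sums
  have hsum : ∀ (ω : Ω) (a b : ℕ), a ≤ b →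
      (∑ j ∈ Finset.Ico a b, D j ω) = B ((b : ℕ) : ℝ) ω - B ((a : ℕ) : ℝ) ω := by
    intro ω a b hab
    rw [Finset.sum_Ico_eq_sub _ hab,
      Finset.sum_range_sub (fun j => B ((j : ℕ) : ℝ) ω),
      Finset.sum_range_sub (fun j => B ((j : ℕ) : ℝ) ω)]
    exact sub_sub_sub_cancel_right _ _ _
  -- the tail event
  set A : Set Ω := {ω | ∀ c : ℕ, ∀ mm : ℕ, ∃ k : ℕ, mm ≤ k ∧
      B ((k : ℕ) : ℝ) ω - B 0 ω ≤ -(c : ℝ)} with hA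
  have htail : ∀ N : ℕ, MeasurableSet[⨆ j, ⨆ (_ : N ≤ j), 𝒢 j] A := by
    intro N
    have hDm : ∀ j, N ≤ j → Measurable[⨆ j, ⨆ (_ : N ≤ j), 𝒢 j] (D j) := by
      intro j hj
      have h1 : Measurable[𝒢 j] (D j) := Measurable.of_comap_le le_rfl
      exact h1.mono (le_iSup₂ (f := fun j (_ : N ≤ j) => 𝒢 j) j hj) le_rfl
    have hDiff : ∀ k, N ≤ k →
        Measurable[⨆ j, ⨆ (_ : N ≤ j), 𝒢 j]
          (fun ω => B ((k : ℕ) : ℝ) ω - B ((N : ℕ) : ℝ) ω) := by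
      intro k hk
      have he : (fun ω => B ((k : ℕ) : ℝ) ω - B ((N : ℕ) : ℝ) ω)
          = fun ω => ∑ j ∈ Finset.Ico N k, D j ω := by
        funext ω; rw [hsum ω N k hk]
      rw [he]
      exact Finset.measurable_sum _ (fun j hj => hDm j (Finset.mem_Ico.1 hj).1)
    have hAeq : A = ⋂ (c : ℕ), ⋂ (mm : ℕ), ⋃ (k : ℕ), ⋃ (_ : max mm N ≤ k),
        {ω | B ((k : ℕ) : ℝ) ω - B ((N : ℕ) : ℝ) ω ≤ -(c : ℝ)} := by
      ext ω
      simp only [hA, Set.mem_setOf_eq, Set.mem_iInter, Set.mem_iUnion, Set.mem_setOf_eq]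
      constructor
      · intro h c mm
        obtain ⟨k, hk1, hk2⟩ :=
          h (c + ⌈B 0 ω - B ((N : ℕ) : ℝ) ω⌉₊) (max mm N)
        refine ⟨k, hk1, ?_⟩
        have h1 : (B 0 ω - B ((N : ℕ) : ℝ) ω : ℝ)
            ≤ ⌈B 0 ω - B ((N : ℕ) : ℝ) ω⌉₊ := Nat.le_ceil _
        push_cast at hk2 h1 ⊢
        linarith
      · intro h c mm
        obtain ⟨k, hk1, hk2⟩ := h (c + ⌈B ((N : ℕ) : ℝ) ω - B 0 ω⌉₊) mm
        refine ⟨k, le_trans (le_max_left _ _) hk1, ?_⟩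
        have h1 : (B ((N : ℕ) : ℝ) ω - B 0 ω : ℝ)
            ≤ ⌈B ((N : ℕ) : ℝ) ω - B 0 ω⌉₊ := Nat.le_ceil _
        push_cast at hk2 h1 ⊢
        linarith
    rw [hAeq]
    refine MeasurableSet.iInter fun c => MeasurableSet.iInter fun mm =>
      MeasurableSet.iUnion fun k => MeasurableSet.iUnion fun hk => ?_
    exact (hDiff k (le_trans (le_max_right _ _) hk)) measurableSet_Iic
  have hAmeas : MeasurableSet A := by
    refine (iSup₂_le fun (j : ℕ) (_ : (0:ℕ) ≤ j) => h_le j) A (htail 0)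
  have h01 : μ A = 0 ∨ μ A = 1 := by
    refine ProbabilityTheory.measure_zero_or_one_of_measurableSet_limsup_atTop h_le hiIndep ?_
    rw [Filter.limsup_eq_iInf_iSup_of_nat]
    exact MeasurableSpace.measurableSet_iInf.2 htail
  -- lower bound on the measure of A
  set ε : ℝ≥0∞ := ProbabilityTheory.gaussianReal 0 1 (Set.Iic (-1 : ℝ)) with hε
  have hEbound : ∀ c : ℕ,
      μ {ω | ∀ k : ℕ, -(c:ℝ) < B ((k : ℕ) : ℝ) ω - B 0 ω} ≤ 1 - ε := by
    intro c
    set K : ℕ := (c + 1) ^ 2 with hK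
    have hmeasD : Measurable (fun ω => B ((K : ℕ) : ℝ) ω - B 0 ω) :=
      (hB.meas _).sub (hB.meas _)
    have hlaw := hB.gauss 0 ((K : ℕ) : ℝ) (by simp) (by exact_mod_cast Nat.zero_le K)
    have hcast : ((K : ℕ) : ℝ) - 0 = ((c : ℝ) + 1) ^ 2 := by
      rw [hK]; push_cast; ring
    rw [hcast] at hlaw
    have hmu : ε ≤ μ {ω | B ((K : ℕ) : ℝ) ω - B 0 ω ≤ -(c:ℝ)} := by
      have he : {ω | B ((K : ℕ) : ℝ) ω - B 0 ω ≤ -(c:ℝ)}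
          = (fun ω => B ((K : ℕ) : ℝ) ω - B 0 ω) ⁻¹' (Set.Iic (-(c:ℝ))) := rfl
      rw [he, ← MeasureTheory.Measure.map_apply hmeasD measurableSet_Iic, hlaw]
      exact gaussian_tail_bound c
    have hsub : {ω | ∀ k : ℕ, -(c:ℝ) < B ((k : ℕ) : ℝ) ω - B 0 ω}
        ⊆ {ω | B ((K : ℕ) : ℝ) ω - B 0 ω ≤ -(c:ℝ)}ᶜ :=
      fun ω hω hle => absurd hle (not_le.2 (hω K))
    calc μ {ω | ∀ k : ℕ, -(c:ℝ) < B ((k : ℕ) : ℝ) ω - B 0 ω}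
        ≤ μ ({ω | B ((K : ℕ) : ℝ) ω - B 0 ω ≤ -(c:ℝ)}ᶜ) := measure_mono hsub
      _ = 1 - μ {ω | B ((K : ℕ) : ℝ) ω - B 0 ω ≤ -(c:ℝ)} :=
          prob_compl_eq_one_sub (hmeasD measurableSet_Iic)
      _ ≤ 1 - ε := tsub_le_tsub_left hmu 1
  have hcompl : μ Aᶜ ≤ 1 - ε := by
    have hsub : Aᶜ ⊆ ⋃ c : ℕ,
        {ω | ∀ k : ℕ, -(c:ℝ) < B ((k : ℕ) : ℝ) ω - B 0 ω} := by
      intro ω hω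
      simp only [hA, Set.mem_compl_iff, Set.mem_setOf_eq] at hω
      push_neg at hω
      obtain ⟨c, mm, hcm⟩ := hω
      have hne : (Finset.range (mm + 1)).Nonempty := ⟨0, Finset.mem_range.2 (Nat.succ_pos _)⟩
      set R : ℝ := (Finset.range (mm + 1)).sup' hne
        (fun k => -(B ((k : ℕ) : ℝ) ω - B 0 ω)) with hR
      refine Set.mem_iUnion.2 ⟨c + ⌈R⌉₊ + 1, fun k => ?_⟩
      rcases lt_or_ge k mm with hk | hk
      · have hkmem : k ∈ Finset.range (mm + 1) := Finset.mem_range.2 (by omega)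
        have h1 : -(B ((k : ℕ) : ℝ) ω - B 0 ω) ≤ R := by
          rw [hR]
          exact Finset.le_sup' (fun k => -(B ((k : ℕ) : ℝ) ω - B 0 ω)) hkmem
        have h2 : R ≤ ⌈R⌉₊ := Nat.le_ceil R
        push_cast
        linarith
      · have h3 := hcm k hk
        push_cast
        push_cast at h3
        linarith
    have hmono : Monotone (fun c : ℕ =>
        {ω | ∀ k : ℕ, -(c:ℝ) < B ((k : ℕ) : ℝ) ω - B 0 ω}) := by
      intro a b hab ω hω
      simp only [Set.mem_setOf_eq] at hω ⊢
      intro k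
      have hcast : (a : ℝ) ≤ (b : ℝ) := Nat.cast_le.2 hab
      linarith [hω k]
    calc μ Aᶜ ≤ μ (⋃ c : ℕ, {ω | ∀ k : ℕ, -(c:ℝ) < B ((k : ℕ) : ℝ) ω - B 0 ω}) :=
        measure_mono hsub
      _ = ⨆ c : ℕ, μ {ω | ∀ k : ℕ, -(c:ℝ) < B ((k : ℕ) : ℝ) ω - B 0 ω} :=
        (hmono.directed_le).measure_iUnion
      _ ≤ 1 - ε := iSup_le fun c => hEbound c
  have hA1 : μ A = 1 := by
    rcases h01 with h0 | h1
    · exfalso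
      have h2 : μ Aᶜ = 1 := by rw [prob_compl_eq_one_sub hAmeas, h0, tsub_zero]
      rw [h2] at hcompl
      have h3 : (1 : ℝ≥0∞) - ε < 1 :=
        ENNReal.sub_lt_self ENNReal.one_ne_top one_ne_zero gaussian_Iic_pos
      exact absurd hcompl (not_le.2 h3)
    · exact h1
  have hae : ∀ᵐ ω ∂μ, ω ∈ A := by
    rw [MeasureTheory.ae_iff]
    have h2 : μ Aᶜ = 0 := by rw [prob_compl_eq_one_sub hAmeas, hA1, tsub_self]
    exact h2
  filter_upwards [hae] with ω hω
  intro s c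
  obtain ⟨mm, hmm⟩ := exists_nat_ge s
  obtain ⟨cc, hcc⟩ := exists_nat_ge (x₀ - c)
  obtain ⟨k, hk1, hk2⟩ := hω cc mm
  refine ⟨(k : ℝ), hmm.trans (Nat.cast_le.2 hk1), ?_⟩
  rw [hB.init ω] at hk2
  linarith

end Probabilistic
/-- **Pathwise equality** (Lemma 4.1 of Henry-Labordère–Obłój–Spoida–Touzi): if
`ξ = (ξ₁,…,ξₙ)` are nondecreasing right-continuous boundaries and `X` is an iterated
Azéma–Yor type embedding based on `ξ`, then for every `m > X₀` with `ξₙ(m) < m`,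
almost surely `1{X̄_{tₙ} ≥ m} = Υₙ(X, m, ζ(m))`, where `ζᵢ(m) = min_{j ≥ i} ξⱼ(m)`. -/
theorem pathwise_equality
    {Ω : Type} [m0 : MeasurableSpace Ω] (μ : Measure Ω) [IsProbabilityMeasure μ]
    (x₀ : ℝ) (n : ℕ) (hn : 1 ≤ n)
    (t : ℕ → ℝ) (ht0 : t 0 = 0) (htmono : ∀ i < n, t i ≤ t (i + 1))
    (ξ : ℕ → ℝ → ℝ)
    (hξmono : ∀ i ∈ Finset.Icc 1 n, Monotone (ξ i))
    (hξrc : ∀ i ∈ Finset.Icc 1 n, ∀ x : ℝ, ContinuousWithinAt (ξ i) (Set.Ici x) x)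
    (X : ℝ → Ω → ℝ) (hX : IsIterAYEmbedding μ x₀ t n ξ X)
    (m : ℝ) (hm : x₀ < m) (hξn : ξ n m < m) :
    ∀ᵐ ω ∂μ,
      (if m ≤ runMax (fun s => X s ω) (t n) then (1 : ℝ) else 0)
        = Ups (fun s => X s ω) t n m
            (fun i => sInf ((fun j => ξ j m) '' Set.Icc i n)) := by
  obtain ⟨-, -, B, hB, hembed⟩ := hX
  have h1 : ∀ᵐ ω ∂μ, ∀ i, i ≤ n →
      (X (t i) ω = B (iterTau (fun s => B s ω) ξ i) ω ∧
        runMax (fun s => X s ω) (t i) =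
          runMax (fun s => B s ω) (iterTau (fun s => B s ω) ξ i)) := by
    rw [MeasureTheory.ae_all_iff]
    intro i
    by_cases hi : i ≤ n
    · filter_upwards [hembed i hi] with ω hω _
      exact hω
    · filter_upwards with ω h
      exact absurd h hi
  filter_upwards [h1, ae_low μ x₀ B hB] with ω hω hlow
  have hζn' : sInf ((fun j => ξ j m) '' Set.Icc n n) = ξ n m := by
    rw [Set.Icc_self, Set.image_singleton, csInf_singleton]
  have hζstep' : ∀ i, 1 ≤ i → i < n →
      sInf ((fun j => ξ j m) '' Set.Icc i n)
        = min (ξ i m) (sInf ((fun j => ξ j m) '' Set.Icc (i + 1) n)) := by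
    intro i h1i h2i
    have hins : Set.Icc i n = insert i (Set.Icc (i + 1) n) := by
      ext a
      simp only [Set.mem_Icc, Set.mem_insert_iff]
      omega
    rw [hins, Set.image_insert_eq, csInf_insert
      (((Set.finite_Icc (i + 1) n).image _).bddBelow)
      ((Set.nonempty_Icc.2 h2i).image _)]
  have hups : Ups (fun s => X s ω) t n m (fun i => sInf ((fun j => ξ j m) '' Set.Icc i n))
      = Ups (fun s => B s ω) (fun i => iterTau (fun s => B s ω) ξ i) n m
        (fun i => sInf ((fun j => ξ j m) '' Set.Icc i n)) :=
    Ups_congr hn (fun i hi => (hω i hi).1) (fun i hi => (hω i hi).2)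
  rw [hups, (hω n le_rfl).2]
  exact main_path x₀ n hn ξ hξmono hξrc (fun s => B s ω) (hB.cont ω) (hB.init ω) hlow
    m hm hξn (fun i => sInf ((fun j => ξ j m) '' Set.Icc i n)) hζn' hζstep'
end
end

section
/- Let p > 1 and let X = (X_t)_{t≤T} be a nonnegative càdlàg submartingale with deterministic initial value X_0 = X₀ ≥ 0 a.s. Then, with values in [0, ∞], E[X̄_T^p] ≤ X₀^p + ∫_{X₀}^{∞} p m^{p−1} · E[(X_T − ((p−1)/p)·m)⁺] / (m − ((p−1)/p)·m) dm ≤ (p/(p−1))^p · E[X_T^p] − (p/(p−1))·X₀^p. -/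
open MeasureTheory ProbabilityTheory Set Filter
open scoped ENNReal NNReal Classical

noncomputable section

section Helpers

lemma ofReal_max0 (a : ℝ) : ENNReal.ofReal (max a 0) = ENNReal.ofReal a := by
  rcases le_total a 0 with h | h
  · rw [max_eq_right h, ENNReal.ofReal_of_nonpos h, ENNReal.ofReal_zero]
  · rw [max_eq_left h]

lemma doobL0 {r : ℝ} (hr : -1 < r) {b : ℝ} (hb : 0 ≤ b) :
    ∫ m in Set.Ioc (0:ℝ) b, m ^ r = b ^ (r+1) / (r+1) := by
  rw [← intervalIntegral.integral_of_le hb, integral_rpow (Or.inl hr),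
    Real.zero_rpow (by linarith), sub_zero]

lemma doobL0int {r : ℝ} (hr : -1 < r) {b : ℝ} (hb : 0 ≤ b) :
    IntegrableOn (fun m : ℝ => m ^ r) (Set.Ioc 0 b) :=
  (intervalIntegrable_iff_integrableOn_Ioc_of_le hb).mp
    (intervalIntegral.intervalIntegrable_rpow' hr)

lemma doobL1 {p : ℝ} (hp : 1 < p) {x b : ℝ} (hb : 0 ≤ b) (hxb : (p-1)/p * b ≤ x) :
    ∫⁻ m in Set.Ioc (0:ℝ) b,
        ENNReal.ofReal (p^2 * m^(p-2)) * ENNReal.ofReal (x - (p-1)/p * m)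
      = ENNReal.ofReal (p^2*x*(b^(p-1)/(p-1)) - p^2*((p-1)/p)*(b^p/p)) := by
  have hp0 : (0:ℝ) < p := by linarith
  have hα0 : (0:ℝ) ≤ (p-1)/p := div_nonneg (by linarith) hp0.le
  have h2 : (-1:ℝ) < p - 2 := by linarith
  have h1 : (-1:ℝ) < p - 1 := by linarith
  set α : ℝ := (p-1)/p with hα
  set g : ℝ → ℝ := fun m => p^2*x*m^(p-2) - p^2*α*(m^(p-1)) with hg
  have key : ∀ m ∈ Set.Ioc (0:ℝ) b, p^2 * m^(p-2) * (x - α*m) = g m := by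
    intro m hm
    have hm1 : m^(p-1) = m^(p-2)*m := by
      rw [show p-1 = (p-2)+1 by ring, Real.rpow_add_one (ne_of_gt hm.1)]
    simp only [hg, hm1]; ring
  have gnn : ∀ m ∈ Set.Ioc (0:ℝ) b, 0 ≤ g m := by
    intro m hm
    rw [← key m hm]
    have : α * m ≤ x := le_trans (by nlinarith [hm.2, hm.1.le]) hxb
    have h2 : (0:ℝ) ≤ p^2 * m^(p-2) := mul_nonneg (by positivity) (Real.rpow_nonneg hm.1.le _)
    nlinarith
  have hint : IntegrableOn g (Set.Ioc 0 b) :=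
    ((doobL0int h2 hb).const_mul (p^2*x)).sub ((doobL0int h1 hb).const_mul (p^2*α))
  calc ∫⁻ m in Set.Ioc (0:ℝ) b,
        ENNReal.ofReal (p^2 * m^(p-2)) * ENNReal.ofReal (x - α * m)
      = ∫⁻ m in Set.Ioc (0:ℝ) b, ENNReal.ofReal (g m) := by
        refine setLIntegral_congr_fun measurableSet_Ioc (fun m hm => ?_)
        rw [← ENNReal.ofReal_mul (mul_nonneg (by positivity) (Real.rpow_nonneg hm.1.le _)),
          key m hm]
    _ = ENNReal.ofReal (∫ m in Set.Ioc (0:ℝ) b, g m) := by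
        refine (ofReal_integral_eq_lintegral_ofReal hint ?_).symm
        filter_upwards [ae_restrict_mem measurableSet_Ioc] with m hm using gnn m hm
    _ = ENNReal.ofReal (p^2*x*(b^(p-1)/(p-1)) - p^2*α*(b^p/p)) := by
        congr 1
        rw [integral_sub ((doobL0int h2 hb).const_mul (p^2*x))
          ((doobL0int h1 hb).const_mul (p^2*α))]
        have e2 : ∫ m in Set.Ioc (0:ℝ) b, m^(p-2) = b^(p-1)/(p-1) := by
          have := doobL0 h2 hb; rwa [show p-2+1 = p-1 by ring] at this
        have e1 : ∫ m in Set.Ioc (0:ℝ) b, m^(p-1) = b^p/p := by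
          have := doobL0 h1 hb; rwa [show p-1+1 = p by ring] at this
        rw [integral_const_mul, integral_const_mul, e2, e1]

lemma doobL3 {p : ℝ} (hp : 1 < p) {x : ℝ} (hx : 0 ≤ x) :
    ∫⁻ m in Set.Ioi (0:ℝ),
        ENNReal.ofReal (p^2 * m^(p-2)) * ENNReal.ofReal (x - (p-1)/p * m)
      = ENNReal.ofReal ((p/(p-1))^p * x^p) := by
  have hp0 : (0:ℝ) < p := by linarith
  have hp1 : (0:ℝ) < p - 1 := by linarith
  rcases eq_or_lt_of_le hx with h0 | hxpos
  · have hz : ∀ m ∈ Set.Ioi (0:ℝ),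
        ENNReal.ofReal (p^2 * m^(p-2)) * ENNReal.ofReal (x - (p-1)/p * m) = 0 := by
      intro m hm
      have hm0 : (0:ℝ) < m := hm
      have h1 : 0 < (p-1)/p * m := mul_pos (div_pos hp1 hp0) hm0
      have : x - (p-1)/p * m ≤ 0 := by rw [← h0]; linarith
      rw [ENNReal.ofReal_of_nonpos this, mul_zero]
    rw [setLIntegral_congr_fun measurableSet_Ioi hz, lintegral_zero,
      ← h0, Real.zero_rpow (ne_of_gt hp0), mul_zero, ENNReal.ofReal_zero]
  · set b : ℝ := x * (p/(p-1)) with hbdef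
    have hb0 : (0:ℝ) < b := by positivity
    have hab : (p-1)/p * b = x := by rw [hbdef]; field_simp
    have tail : ∀ m ∈ Set.Ioi b,
        ENNReal.ofReal (p^2 * m^(p-2)) * ENNReal.ofReal (x - (p-1)/p * m) = 0 := by
      intro m hm
      have hm' : b < m := hm
      have : x - (p-1)/p * m ≤ 0 := by
        have h1 : (p-1)/p * b < (p-1)/p * m :=
          mul_lt_mul_of_pos_left hm' (by positivity)
        linarith [hab]
      rw [ENNReal.ofReal_of_nonpos this, mul_zero]
    rw [← Set.Ioc_union_Ioi_eq_Ioi hb0.le,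
      lintegral_union measurableSet_Ioi (Set.Ioc_disjoint_Ioi le_rfl),
      setLIntegral_congr_fun measurableSet_Ioi tail, lintegral_zero, add_zero,
      doobL1 hp hb0.le (le_of_eq hab)]
    congr 1
    have hβ : (0:ℝ) < p/(p-1) := by positivity
    have hbp1 : b^(p-1) = x^(p-1) * (p/(p-1))^(p-1) := Real.mul_rpow hx hβ.le
    have hbp : b^p = x^p * (p/(p-1))^p := Real.mul_rpow hx hβ.le
    have hxp : x^p = x^(p-1) * x := by
      have := Real.rpow_add_one (ne_of_gt hxpos) (p-1)
      rw [show p-1+1 = p by ring] at this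
      exact this
    have hβp : (p/(p-1))^p = (p/(p-1))^(p-1) * (p/(p-1)) := by
      have := Real.rpow_add_one (ne_of_gt hβ) (p-1)
      rw [show p-1+1 = p by ring] at this
      exact this
    rw [hbp1, hbp, hxp, hβp]
    have hpne : p ≠ 0 := ne_of_gt hp0
    have hp1ne : p - 1 ≠ 0 := ne_of_gt hp1
    field_simp
    ring

lemma doobL4 {p : ℝ} (hp : 1 < p) {x₀ : ℝ} (hx₀ : 0 ≤ x₀) :
    ∫⁻ m in Set.Ioc (0:ℝ) x₀,
        ENNReal.ofReal (p^2 * m^(p-2)) * ENNReal.ofReal (x₀ - (p-1)/p * m)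
      = ENNReal.ofReal (x₀^p + (p/(p-1))*x₀^p) := by
  have hp0 : (0:ℝ) < p := by linarith
  have hp1 : (0:ℝ) < p - 1 := by linarith
  have hle : (p-1)/p * x₀ ≤ x₀ := by
    have h1 : (p-1)/p ≤ 1 := by rw [div_le_one hp0]; linarith
    nlinarith
  rw [doobL1 hp hx₀ hle]
  congr 1
  rcases eq_or_lt_of_le hx₀ with h0 | hpos
  · rw [← h0]
    rw [Real.zero_rpow (ne_of_gt hp1), Real.zero_rpow (ne_of_gt hp0)]
    ring
  · have hxp : x₀^p = x₀^(p-1) * x₀ := by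
      have := Real.rpow_add_one (ne_of_gt hpos) (p-1)
      rw [show p-1+1 = p by ring] at this
      exact this
    rw [hxp]
    have hpne : p ≠ 0 := ne_of_gt hp0
    have hp1ne : p - 1 ≠ 0 := ne_of_gt hp1
    field_simp
    ring

lemma doobL5 {Ω : Type} [m0 : MeasurableSpace Ω] {μ : Measure Ω} [IsProbabilityMeasure μ]
    {ℱ : Filtration ℝ m0} {X : ℝ → Ω → ℝ} (hX : Submartingale X ℱ μ)
    {T : ℝ} (F : Finset ℝ) (hF : ∀ t ∈ F, t ≤ T)
    {c m : ℝ} (hcm : c < m) :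
    ENNReal.ofReal (m - c) * μ {ω | ∃ t ∈ F, m < X t ω}
      ≤ ∫⁻ ω, ENNReal.ofReal (X T ω - c) ∂μ := by
  set Z : ℝ → Ω → ℝ := fun t ω => max (X t ω - c) 0 with hZdef
  have hZ : Submartingale Z ℱ μ := by
    have h := Submartingale.pos (hX.sub_martingale (martingale_const ℱ μ c))
    exact h
  have hZapp : ∀ t ω, Z t ω = max (X t ω - c) 0 := fun t ω => rfl
  set l : List ℝ := F.sort (· ≤ ·) with hldef
  have hl : l.Pairwise (· ≤ ·) := Finset.pairwise_sort _ _
  have hmem : ∀ a : ℝ, a ∈ l ↔ a ∈ F := fun a => Finset.mem_sort _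
  set τ : ℕ → ℝ := fun k => l.getD k T with hτdef
  have hτle : ∀ k, τ k ≤ T := by
    intro k
    by_cases h : k < l.length
    · rw [hτdef]; simp only []
      rw [List.getD_eq_getElem l T h]
      exact hF _ ((hmem _).1 (l.getElem_mem h))
    · rw [hτdef]; simp only []
      rw [List.getD_eq_default l T (le_of_not_gt h)]
  have hτmono : Monotone τ := by
    intro i j hij
    by_cases hj : j < l.length
    · have hi : i < l.length := lt_of_le_of_lt hij hj
      rw [hτdef]; simp only []
      rw [List.getD_eq_getElem l T hi, List.getD_eq_getElem l T hj]
      exact hl.rel_get_of_le (a := ⟨i, hi⟩) (b := ⟨j, hj⟩) hij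
    · have := hτle i
      rw [hτdef] at this ⊢; simp only [] at this ⊢
      rw [List.getD_eq_default l T (le_of_not_gt hj)]
      exact this
  have hτT : τ l.length = T := List.getD_eq_default l T le_rfl
  set 𝒢 : Filtration ℕ m0 :=
    ⟨fun k => ℱ (τ k), fun i j hij => ℱ.mono (hτmono hij), fun k => ℱ.le _⟩ with h𝒢
  set g : ℕ → Ω → ℝ := fun k => Z (τ k) with hgdef
  have hg : Submartingale g 𝒢 μ :=
    ⟨fun k => hZ.stronglyAdapted (τ k), fun i j hij => hZ.2.1 _ _ (hτmono hij),
      fun k => hZ.integrable _⟩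
  have hgnn : 0 ≤ g := by
    intro k
    intro ω
    exact le_max_right _ _
  set ε : ℝ≥0 := (m - c).toNNReal with hε
  have hεc : ((ε : ℝ≥0∞) : ℝ≥0∞) = ENNReal.ofReal (m - c) := rfl
  have hεr : (ε : ℝ) = m - c := Real.coe_toNNReal _ (le_of_lt (sub_pos.2 hcm))
  have hmax := maximal_ineq hg hgnn (ε := ε) l.length
  have hsub : {ω | ∃ t ∈ F, m < X t ω} ⊆
      {ω | (ε : ℝ) ≤ (Finset.range (l.length + 1)).sup' Finset.nonempty_range_add_one
        fun k => g k ω} := by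
    intro ω hω
    obtain ⟨t, htF, hmt⟩ := hω
    obtain ⟨k, hk⟩ := List.mem_iff_get.1 ((hmem t).2 htF)
    have hkr : (k : ℕ) ∈ Finset.range (l.length + 1) :=
      Finset.mem_range.2 (Nat.lt_succ_of_lt k.isLt)
    have hgk : (ε : ℝ) ≤ g k ω := by
      rw [hεr, hgdef]; simp only []
      rw [hZapp]
      have : τ k = t := by
        rw [hτdef]; simp only []
        rw [List.getD_eq_getElem l T k.isLt]
        exact hk
      rw [this]
      exact le_trans (by linarith) (le_max_left _ _)
    exact le_trans hgk (Finset.le_sup' (fun k => g k ω) hkr)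
  have hμle : μ {ω | ∃ t ∈ F, m < X t ω} ≤
      μ {ω | (ε : ℝ) ≤ (Finset.range (l.length + 1)).sup' Finset.nonempty_range_add_one
        fun k => g k ω} := measure_mono hsub
  have hint : ∫ ω in {ω | (ε : ℝ) ≤ (Finset.range (l.length + 1)).sup'
        Finset.nonempty_range_add_one fun k => g k ω}, g l.length ω ∂μ
      ≤ ∫ ω, g l.length ω ∂μ :=
    setIntegral_le_integral (hg.integrable _) (ae_of_all _ fun ω => le_max_right _ _)
  have hgT : g l.length = Z T := by rw [hgdef]; simp only [hτT]
  calc ENNReal.ofReal (m - c) * μ {ω | ∃ t ∈ F, m < X t ω}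
      = (ε : ℝ≥0∞) * μ {ω | ∃ t ∈ F, m < X t ω} := by rw [hεc]
    _ ≤ (ε : ℝ≥0∞) * μ {ω | (ε : ℝ) ≤ (Finset.range (l.length + 1)).sup'
          Finset.nonempty_range_add_one fun k => g k ω} := mul_le_mul_right hμle _
    _ = ε • μ {ω | (ε : ℝ) ≤ (Finset.range (l.length + 1)).sup'
          Finset.nonempty_range_add_one fun k => g k ω} := by
        rw [ENNReal.smul_def, smul_eq_mul]
    _ ≤ ENNReal.ofReal (∫ ω in {ω | (ε : ℝ) ≤ (Finset.range (l.length + 1)).sup'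
          Finset.nonempty_range_add_one fun k => g k ω}, g l.length ω ∂μ) := hmax
    _ ≤ ENNReal.ofReal (∫ ω, g l.length ω ∂μ) := ENNReal.ofReal_le_ofReal hint
    _ = ∫⁻ ω, ENNReal.ofReal (g l.length ω) ∂μ :=
        ofReal_integral_eq_lintegral_ofReal (hg.integrable _)
          (ae_of_all _ fun ω => le_max_right _ _)
    _ = ∫⁻ ω, ENNReal.ofReal (X T ω - c) ∂μ := by
        rw [hgT]
        exact lintegral_congr fun ω => by rw [hZapp, ofReal_max0]

end Helpers

/-- **Doob's `L^p` inequalities, `p > 1`** (Proposition 3.1 (i)): for a nonnegative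
càdlàg submartingale `X` with `X_0 = X₀` a.s., with values in `[0,∞]`,
`E[X̄_T^p] ≤ X₀^p + ∫_{X₀}^∞ p m^{p-1} E[(X_T - ((p-1)/p) m)⁺] / (m - ((p-1)/p) m) dm
≤ (p/(p-1))^p E[X_T^p] - (p/(p-1)) X₀^p`. -/
theorem doob_Lp_inequality
    {Ω : Type} [m0 : MeasurableSpace Ω] (μ : Measure Ω) [IsProbabilityMeasure μ]
    (p : ℝ) (hp : 1 < p) (T : ℝ) (hT : 0 ≤ T) (x₀ : ℝ) (hx₀ : 0 ≤ x₀)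
    (ℱ : Filtration ℝ m0) (X : ℝ → Ω → ℝ)
    (hX : Submartingale X ℱ μ)
    (hcadlag : ∀ ω, IsCadlag fun s => X s ω)
    (hnonneg : ∀ s ω, 0 ≤ X s ω)
    (hinit : ∀ᵐ ω ∂μ, X 0 ω = x₀) :
    (∫⁻ ω, ENNReal.ofReal ((runMax (fun s => X s ω) T) ^ p) ∂μ)
      ≤ ENNReal.ofReal (x₀ ^ p)
          + ∫⁻ m in Set.Ioi x₀,
              ENNReal.ofReal (p * m ^ (p - 1) / (m - ((p - 1) / p) * m))
                * ∫⁻ ω, ENNReal.ofReal (X T ω - ((p - 1) / p) * m) ∂μ ∧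
    ENNReal.ofReal (x₀ ^ p)
        + (∫⁻ m in Set.Ioi x₀,
            ENNReal.ofReal (p * m ^ (p - 1) / (m - ((p - 1) / p) * m))
              * ∫⁻ ω, ENNReal.ofReal (X T ω - ((p - 1) / p) * m) ∂μ)
      ≤ ENNReal.ofReal ((p / (p - 1)) ^ p)
            * (∫⁻ ω, ENNReal.ofReal ((X T ω) ^ p) ∂μ)
          - ENNReal.ofReal ((p / (p - 1)) * x₀ ^ p) := by
  have hp0 : (0:ℝ) < p := by linarith
  have hp1 : (0:ℝ) < p - 1 := by linarith
  have hα0 : (0:ℝ) ≤ (p-1)/p := div_nonneg hp1.le hp0.le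
  have hα1 : (p-1)/p < 1 := by rw [div_lt_one hp0]; linarith
  have hXmeas : ∀ t, Measurable (X t) := fun t =>
    ((hX.stronglyAdapted t).mono (ℱ.le t)).measurable
  set I : ℝ → ℝ≥0∞ := fun m => ∫⁻ ω, ENNReal.ofReal (X T ω - (p-1)/p * m) ∂μ with hI
  -- the coefficient identity
  have hwW : ∀ m : ℝ, 0 < m →
      ENNReal.ofReal (p * m ^ (p - 1) / (m - ((p - 1) / p) * m))
        = ENNReal.ofReal (p^2 * m^(p-2)) := by
    intro m hm
    congr 1
    have hm' : m - (p-1)/p * m = m/p := by field_simp; ring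
    have key : m^(p-1) = m^(p-2)*m := by
      rw [show p-1 = (p-2)+1 by ring, Real.rpow_add_one (ne_of_gt hm)]
    rw [hm', key]
    field_simp

  -- rational skeleton
  set enc : ℚ ≃ ℕ := Denumerable.eqv ℚ with henc
  set q' : ℕ → ℝ := fun k => if k = 0 then T else min T (max 0 ((enc.symm (k-1) : ℚ) : ℝ))
    with hq'
  have hq'le : ∀ k, q' k ≤ T := by
    intro k
    by_cases h : k = 0
    · simp only [hq', if_pos h]; exact le_rfl
    · simp only [hq', if_neg h]; exact min_le_left _ _
  have hq'0 : q' 0 = T := by simp [hq']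
  have hq'rat : ∀ r : ℚ, 0 ≤ (r:ℝ) → (r:ℝ) ≤ T → q' (enc r + 1) = (r:ℝ) := by
    intro r h0 hT'
    simp only [hq', Nat.add_sub_cancel, if_neg (Nat.succ_ne_zero _)]
    rw [Equiv.symm_apply_apply, max_eq_right h0, min_eq_right hT']
  set M : ℕ → Ω → ℝ := fun n ω => (Finset.range (n+1)).sup' Finset.nonempty_range_add_one
      (fun k => X (q' k) ω) with hM
  have hMmeas : ∀ n, Measurable (M n) := fun n =>
    Finset.measurable_range_sup'' (fun k _ => hXmeas (q' k))
  have hMb : ∀ n k ω, k ≤ n → X (q' k) ω ≤ M n ω := fun n k ω hk =>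
    Finset.le_sup' (fun j => X (q' j) ω) (Finset.mem_range.2 (Nat.lt_succ_of_le hk))
  have hM0 : ∀ n ω, 0 ≤ M n ω := fun n ω =>
    le_trans (hnonneg _ ω) (hMb n 0 ω (Nat.zero_le n))
  have hMmono : ∀ ω, Monotone fun n => M n ω := by
    intro ω i j hij
    exact Finset.sup'_mono _ (Finset.range_subset_range.2 (by omega)) _
  -- per-n bound
  have Bn : ∀ n, ∫⁻ ω, ENNReal.ofReal (M n ω ^ p) ∂μ
      ≤ ENNReal.ofReal (x₀ ^ p)
          + ∫⁻ m in Set.Ioi x₀,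
              ENNReal.ofReal (p * m ^ (p - 1) / (m - ((p - 1) / p) * m)) * I m := by
    intro n
    rw [lintegral_rpow_eq_lintegral_meas_lt_mul μ (ae_of_all _ (fun ω => hM0 n ω))
      (hMmeas n).aemeasurable hp0]
    rw [← Set.Ioc_union_Ioi_eq_Ioi hx₀,
      lintegral_union measurableSet_Ioi (Set.Ioc_disjoint_Ioi le_rfl), mul_add]
    refine add_le_add ?_ ?_
    · have hle : ∫⁻ t in Set.Ioc (0:ℝ) x₀, μ {a | t < M n a} * ENNReal.ofReal (t ^ (p-1))
          ≤ ∫⁻ t in Set.Ioc (0:ℝ) x₀, ENNReal.ofReal (t ^ (p-1)) := by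
        refine lintegral_mono fun t => ?_
        calc μ {a | t < M n a} * ENNReal.ofReal (t ^ (p-1))
            ≤ 1 * ENNReal.ofReal (t ^ (p-1)) := mul_le_mul_left prob_le_one _
          _ = ENNReal.ofReal (t ^ (p-1)) := one_mul _
      have heval : ∫⁻ t in Set.Ioc (0:ℝ) x₀, ENNReal.ofReal (t ^ (p-1))
          = ENNReal.ofReal (x₀^p / p) := by
        rw [← ofReal_integral_eq_lintegral_ofReal (doobL0int (by linarith) hx₀) ?_]
        · congr 1
          have := doobL0 (show (-1:ℝ) < p-1 by linarith) hx₀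
          rwa [show p-1+1 = p by ring] at this
        · filter_upwards [ae_restrict_mem measurableSet_Ioc] with t ht
          exact Real.rpow_nonneg ht.1.le _
      calc ENNReal.ofReal p *
            ∫⁻ t in Set.Ioc (0:ℝ) x₀, μ {a | t < M n a} * ENNReal.ofReal (t^(p-1))
          ≤ ENNReal.ofReal p * ENNReal.ofReal (x₀^p / p) :=
            mul_le_mul_right (le_trans hle (le_of_eq heval)) _
        _ = ENNReal.ofReal (x₀ ^ p) := by
            rw [← ENNReal.ofReal_mul hp0.le]
            congr 1
            field_simp
    · rw [← lintegral_const_mul' (ENNReal.ofReal p) _ ENNReal.ofReal_ne_top]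
      refine lintegral_mono_ae ?_
      filter_upwards [ae_restrict_mem measurableSet_Ioi] with t ht
      have ht0 : 0 < t := lt_of_le_of_lt hx₀ ht
      have hαt : (p-1)/p * t < t := by nlinarith
      have hFle : ∀ s ∈ (Finset.range (n+1)).image q', s ≤ T := by
        intro s hs
        obtain ⟨k, _, rfl⟩ := Finset.mem_image.1 hs
        exact hq'le k
      have hmax := doobL5 hX ((Finset.range (n+1)).image q') hFle hαt
      have hsub : {a | t < M n a} ⊆
          {ω | ∃ s ∈ (Finset.range (n+1)).image q', t < X s ω} := by
        intro ω hω
        obtain ⟨k, hk, hkt⟩ := (Finset.lt_sup'_iff Finset.nonempty_range_add_one).1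
          (show t < (Finset.range (n+1)).sup' Finset.nonempty_range_add_one
            (fun k => X (q' k) ω) from hω)
        exact ⟨q' k, Finset.mem_image_of_mem _ hk, hkt⟩
      have hμt : ENNReal.ofReal (t - (p-1)/p*t) * μ {a | t < M n a} ≤ I t :=
        le_trans (mul_le_mul_right (measure_mono hsub) _) hmax
      set e : ℝ≥0∞ := ENNReal.ofReal (t - (p-1)/p*t) with he
      have he0 : e ≠ 0 := (ENNReal.ofReal_pos.2 (by linarith)).ne'
      have heT : e ≠ ⊤ := ENNReal.ofReal_ne_top
      have hdiv : μ {a | t < M n a} ≤ I t / e :=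
        (ENNReal.le_div_iff_mul_le (Or.inl he0) (Or.inl heT)).2 (by rw [mul_comm]; exact hμt)
      have hw : ENNReal.ofReal (p * t^(p-1) / (t - (p-1)/p * t))
          = ENNReal.ofReal (p * t^(p-1)) / e := ENNReal.ofReal_div_of_pos (by linarith)
      calc ENNReal.ofReal p * (μ {a | t < M n a} * ENNReal.ofReal (t^(p-1)))
          = ENNReal.ofReal (p * t^(p-1)) * μ {a | t < M n a} := by
            rw [ENNReal.ofReal_mul hp0.le]; ring
        _ ≤ ENNReal.ofReal (p * t^(p-1)) * (I t / e) := mul_le_mul_right hdiv _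
        _ = ENNReal.ofReal (p * t^(p-1)) / e * I t := by
            rw [div_eq_mul_inv, div_eq_mul_inv]; ring
        _ = ENNReal.ofReal (p * t^(p-1) / (t - (p-1)/p * t)) * I t := by rw [hw]
  -- pointwise sup bound
  have hpt : ∀ ω, ENNReal.ofReal ((runMax (fun s => X s ω) T) ^ p)
      ≤ ⨆ n, ENNReal.ofReal (M n ω ^ p) := by
    intro ω
    set S : ℝ≥0∞ := ⨆ n, ENNReal.ofReal (M n ω ^ p) with hS
    by_cases hStop : S = ⊤
    · rw [hStop]; exact le_top
    set a : ℝ := S.toReal ^ p⁻¹ with ha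
    have ha0 : 0 ≤ a := Real.rpow_nonneg ENNReal.toReal_nonneg _
    have hMa : ∀ n, M n ω ≤ a := by
      intro n
      have h1 : ENNReal.ofReal (M n ω ^ p) ≤ S :=
        le_iSup (fun n => ENNReal.ofReal (M n ω ^ p)) n
      have h2 : M n ω ^ p ≤ S.toReal := by
        rw [← ENNReal.ofReal_toReal hStop] at h1
        exact (ENNReal.ofReal_le_ofReal_iff ENNReal.toReal_nonneg).1 h1
      calc M n ω = (M n ω ^ p) ^ p⁻¹ :=
            (Real.rpow_rpow_inv (hM0 n ω) (ne_of_gt hp0)).symm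
        _ ≤ a := Real.rpow_le_rpow (Real.rpow_nonneg (hM0 n ω) _) h2 (by positivity)
    have hXa : ∀ s ∈ Set.Icc 0 T, X s ω ≤ a := by
      intro s hs
      rcases eq_or_lt_of_le hs.2 with hsT | hsT
      · rw [hsT]
        calc X T ω = X (q' 0) ω := by rw [hq'0]
          _ ≤ M 0 ω := hMb 0 0 ω le_rfl
          _ ≤ a := hMa 0
      · have hrk : ∀ k : ℕ, ∃ r : ℚ, s < (r:ℝ) ∧ (r:ℝ) < min (s + 1/(k+1)) T := by
          intro k
          refine exists_rat_btwn (lt_min ?_ hsT)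
          have : (0:ℝ) < 1/(k+1) := by positivity
          linarith
        choose r hr1 hr2 using hrk
        have hconv : Tendsto (fun k : ℕ => ((r k : ℝ))) atTop (nhds s) := by
          have hup : Tendsto (fun k : ℕ => s + 1/((k:ℝ)+1)) atTop (nhds s) := by
            have := tendsto_one_div_add_atTop_nhds_zero_nat (𝕜 := ℝ)
            have h2 := tendsto_const_nhds (x := s) (f := atTop (α := ℕ)) |>.add this
            simpa using h2
          refine tendsto_of_tendsto_of_tendsto_of_le_of_le
            (tendsto_const_nhds) hup (fun k => (hr1 k).le) (fun k => ?_)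
          exact le_trans (hr2 k).le (min_le_left _ _)
        have hmem : ∀ k : ℕ, ((r k : ℝ)) ∈ Set.Ici s := fun k => (hr1 k).le
        have hXconv : Tendsto (fun k => X (r k) ω) atTop (nhds (X s ω)) := by
          have hwithin : Tendsto (fun k : ℕ => ((r k : ℝ))) atTop (nhdsWithin s (Set.Ici s)) :=
            tendsto_nhdsWithin_iff.2 ⟨hconv, Eventually.of_forall hmem⟩
          exact ((hcadlag ω).1 s).tendsto.comp hwithin
        refine le_of_tendsto hXconv (Eventually.of_forall fun k => ?_)
        have h0r : 0 ≤ ((r k : ℝ)) := le_trans hs.1 (hr1 k).le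
        have hrT : ((r k : ℝ)) ≤ T := le_trans (hr2 k).le (min_le_right _ _)
        have := hq'rat (r k) h0r hrT
        calc X (r k) ω = X (q' (enc (r k) + 1)) ω := by rw [this]
          _ ≤ M (enc (r k) + 1) ω := hMb _ _ ω le_rfl
          _ ≤ a := hMa _
    have himg : ∀ y ∈ (fun s => X s ω) '' Set.Icc 0 T, y ≤ a := by
      rintro y ⟨s, hs, rfl⟩
      exact hXa s hs
    have hrm_le : runMax (fun s => X s ω) T ≤ a := Real.sSup_le himg ha0
    have hbdd : BddAbove ((fun s => X s ω) '' Set.Icc 0 T) := ⟨a, himg⟩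
    have hrm_0 : 0 ≤ runMax (fun s => X s ω) T :=
      le_trans (hnonneg 0 ω) (le_csSup hbdd ⟨0, ⟨le_rfl, hT⟩, rfl⟩)
    calc ENNReal.ofReal ((runMax (fun s => X s ω) T) ^ p)
        ≤ ENNReal.ofReal (a ^ p) :=
          ENNReal.ofReal_le_ofReal (Real.rpow_le_rpow hrm_0 hrm_le hp0.le)
      _ = ENNReal.ofReal S.toReal := by
          rw [ha, Real.rpow_inv_rpow ENNReal.toReal_nonneg (ne_of_gt hp0)]
      _ = S := ENNReal.ofReal_toReal hStop
  -- part 1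
  have part1 : (∫⁻ ω, ENNReal.ofReal ((runMax (fun s => X s ω) T) ^ p) ∂μ)
      ≤ ENNReal.ofReal (x₀ ^ p)
          + ∫⁻ m in Set.Ioi x₀,
              ENNReal.ofReal (p * m ^ (p - 1) / (m - ((p - 1) / p) * m)) * I m := by
    calc (∫⁻ ω, ENNReal.ofReal ((runMax (fun s => X s ω) T) ^ p) ∂μ)
        ≤ ∫⁻ ω, ⨆ n, ENNReal.ofReal (M n ω ^ p) ∂μ := lintegral_mono hpt
      _ = ⨆ n, ∫⁻ ω, ENNReal.ofReal (M n ω ^ p) ∂μ := by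
          refine lintegral_iSup (fun n => ((hMmeas n).pow measurable_const).ennreal_ofReal) ?_
          intro i j hij ω
          exact ENNReal.ofReal_le_ofReal
            (Real.rpow_le_rpow (hM0 i ω) (hMmono ω hij) hp0.le)
      _ ≤ _ := iSup_le Bn
  refine ⟨part1, ?_⟩
  -- part 2
  have hEXT : x₀ ≤ ∫ ω, X T ω ∂μ := by
    have h01 := hX.2.1 0 T hT
    have hle : ∫ ω, X 0 ω ∂μ ≤ ∫ ω, (μ[X T | ℱ 0]) ω ∂μ :=
      integral_mono_ae (hX.integrable 0) integrable_condExp h01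
    rw [integral_condExp (ℱ.le 0)] at hle
    have h0 : ∫ ω, X 0 ω ∂μ = x₀ := by
      rw [integral_congr_ae hinit]
      simp
    linarith
  have hIlb : ∀ m : ℝ, ENNReal.ofReal (x₀ - (p-1)/p * m) ≤ I m := by
    intro m
    have hintg : Integrable (fun ω => X T ω - (p-1)/p*m) μ :=
      (hX.integrable T).sub (integrable_const _)
    have h1 : ENNReal.ofReal (∫ ω, (X T ω - (p-1)/p*m) ∂μ) ≤ I m := by
      have h2 : ∫ ω, (X T ω - (p-1)/p*m) ∂μ ≤ ∫ ω, max (X T ω - (p-1)/p*m) 0 ∂μ :=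
        integral_mono hintg hintg.pos_part (fun ω => le_max_left _ _)
      calc ENNReal.ofReal (∫ ω, (X T ω - (p-1)/p*m) ∂μ)
          ≤ ENNReal.ofReal (∫ ω, max (X T ω - (p-1)/p*m) 0 ∂μ) :=
            ENNReal.ofReal_le_ofReal h2
        _ = ∫⁻ ω, ENNReal.ofReal (max (X T ω - (p-1)/p*m) 0) ∂μ :=
            ofReal_integral_eq_lintegral_ofReal hintg.pos_part
              (ae_of_all _ fun ω => le_max_right _ _)
        _ = I m := lintegral_congr fun ω => ofReal_max0 _
    refine le_trans (ENNReal.ofReal_le_ofReal ?_) h1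
    rw [integral_sub (hX.integrable T) (integrable_const _), integral_const]
    simp only [measure_univ, ENNReal.toReal_one, probReal_univ, smul_eq_mul, one_mul]
    linarith
  have hmeasu : Measurable (Function.uncurry fun (m:ℝ) (ω:Ω) =>
      ENNReal.ofReal (p^2*m^(p-2)) * ENNReal.ofReal (X T ω - (p-1)/p*m)) := by
    apply Measurable.mul (f := fun q : ℝ × Ω => ENNReal.ofReal (p^2*q.1^(p-2)))
      (g := fun q : ℝ × Ω => ENNReal.ofReal (X T q.2 - (p-1)/p*q.1))
    · exact Measurable.ennreal_ofReal
        ((measurable_fst.pow measurable_const).const_mul _)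
    · exact Measurable.ennreal_ofReal
        (((hXmeas T).comp measurable_snd).sub (measurable_fst.const_mul _))
  have hswap : ∀ S : Set ℝ,
      (∫⁻ ω, ∫⁻ m in S, ENNReal.ofReal (p^2*m^(p-2))
          * ENNReal.ofReal (X T ω - (p-1)/p*m) ∂volume ∂μ)
        = ∫⁻ m in S, ENNReal.ofReal (p^2*m^(p-2)) * I m ∂volume := by
    intro S
    have hsw := lintegral_lintegral_swap (μ := volume.restrict S) (ν := μ)
      (f := fun m ω => ENNReal.ofReal (p^2*m^(p-2)) * ENNReal.ofReal (X T ω - (p-1)/p*m))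
      hmeasu.aemeasurable
    rw [← hsw]
    exact lintegral_congr fun m => lintegral_const_mul' _ _ ENNReal.ofReal_ne_top
  have hmeasA : Measurable fun ω => ∫⁻ m in Set.Ioc (0:ℝ) x₀,
      ENNReal.ofReal (p^2*m^(p-2)) * ENNReal.ofReal (X T ω - (p-1)/p*m) ∂volume :=
    Measurable.lintegral_prod_right' (ν := volume.restrict (Set.Ioc (0:ℝ) x₀))
      (hmeasu.comp measurable_swap)
  have keyId : ENNReal.ofReal ((p/(p-1))^p) * (∫⁻ ω, ENNReal.ofReal ((X T ω)^p) ∂μ)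
      = (∫⁻ ω, ∫⁻ m in Set.Ioc (0:ℝ) x₀, ENNReal.ofReal (p^2*m^(p-2))
            * ENNReal.ofReal (X T ω - (p-1)/p*m) ∂volume ∂μ)
        + ∫⁻ m in Set.Ioi x₀, ENNReal.ofReal (p^2*m^(p-2)) * I m ∂volume := by
    rw [← lintegral_const_mul' _ _ ENNReal.ofReal_ne_top]
    have hptw : ∀ ω, ENNReal.ofReal ((p/(p-1))^p) * ENNReal.ofReal ((X T ω)^p)
        = (∫⁻ m in Set.Ioc (0:ℝ) x₀, ENNReal.ofReal (p^2*m^(p-2))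
              * ENNReal.ofReal (X T ω - (p-1)/p*m) ∂volume)
          + ∫⁻ m in Set.Ioi x₀, ENNReal.ofReal (p^2*m^(p-2))
              * ENNReal.ofReal (X T ω - (p-1)/p*m) ∂volume := by
      intro ω
      rw [← ENNReal.ofReal_mul (Real.rpow_nonneg (by positivity) _),
        ← doobL3 hp (hnonneg T ω), ← Set.Ioc_union_Ioi_eq_Ioi hx₀,
        lintegral_union measurableSet_Ioi (Set.Ioc_disjoint_Ioi le_rfl)]
    rw [lintegral_congr hptw, lintegral_add_left hmeasA, hswap (Set.Ioi x₀)]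
  have hB : (∫⁻ m in Set.Ioi x₀,
        ENNReal.ofReal (p * m ^ (p - 1) / (m - ((p - 1) / p) * m)) * I m)
      = ∫⁻ m in Set.Ioi x₀, ENNReal.ofReal (p^2*m^(p-2)) * I m :=
    setLIntegral_congr_fun measurableSet_Ioi
      (fun m hm => by rw [hwW m (lt_of_le_of_lt hx₀ hm)])
  have hA : ENNReal.ofReal (x₀^p) + ENNReal.ofReal ((p/(p-1)) * x₀^p)
      ≤ ∫⁻ ω, ∫⁻ m in Set.Ioc (0:ℝ) x₀, ENNReal.ofReal (p^2*m^(p-2))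
          * ENNReal.ofReal (X T ω - (p-1)/p*m) ∂volume ∂μ := by
    rw [hswap (Set.Ioc (0:ℝ) x₀)]
    calc ENNReal.ofReal (x₀^p) + ENNReal.ofReal ((p/(p-1)) * x₀^p)
        = ENNReal.ofReal (x₀^p + (p/(p-1))*x₀^p) := by
          rw [ENNReal.ofReal_add (Real.rpow_nonneg hx₀ _)
            (mul_nonneg (by positivity) (Real.rpow_nonneg hx₀ _))]
      _ = ∫⁻ m in Set.Ioc (0:ℝ) x₀, ENNReal.ofReal (p^2*m^(p-2))
            * ENNReal.ofReal (x₀ - (p-1)/p*m) ∂volume := (doobL4 hp hx₀).symm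
      _ ≤ ∫⁻ m in Set.Ioc (0:ℝ) x₀, ENNReal.ofReal (p^2*m^(p-2)) * I m ∂volume :=
          lintegral_mono fun m => mul_le_mul_right (hIlb m) _
  refine (ENNReal.cancel_of_ne ENNReal.ofReal_ne_top).le_tsub_of_add_le_right ?_
  rw [keyId]
  calc ENNReal.ofReal (x₀ ^ p)
        + (∫⁻ m in Set.Ioi x₀,
            ENNReal.ofReal (p * m ^ (p - 1) / (m - ((p - 1) / p) * m)) * I m)
        + ENNReal.ofReal ((p / (p - 1)) * x₀ ^ p)
      = (ENNReal.ofReal (x₀ ^ p) + ENNReal.ofReal ((p / (p - 1)) * x₀ ^ p))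
        + ∫⁻ m in Set.Ioi x₀, ENNReal.ofReal (p^2*m^(p-2)) * I m := by
        rw [hB]; ring
    _ ≤ (∫⁻ ω, ∫⁻ m in Set.Ioc (0:ℝ) x₀, ENNReal.ofReal (p^2*m^(p-2))
            * ENNReal.ofReal (X T ω - (p-1)/p*m) ∂volume ∂μ)
        + ∫⁻ m in Set.Ioi x₀, ENNReal.ofReal (p^2*m^(p-2)) * I m ∂volume :=
        add_le_add hA le_rfl


end
end

section
/- Let X = (X_t)_{t≤T} be a nonnegative càdlàg submartingale with deterministic initial value X_0 = X₀ ≥ 0 a.s. Then, with values in [0, ∞], E[X̄_T] ≤ X₀ + ∫_{X₀}^{∞} E[λ(m)] dm ≤ (e/(e−1)) · ( E[X_T log X_T] + V(1 ∨ X₀) ), where λ(m) := 1 for m < 1 and λ(m) := (X_T − m/e)⁺ / (m − m/e) for m ≥ 1. -/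
open MeasureTheory ProbabilityTheory Set Filter
open scoped ENNReal NNReal Classical

noncomputable section

/-- `V(x) = x - x log x` (with `log 0 = 0` in Mathlib, so `V 0 = 0`). -/
def Vfun (x : ℝ) : ℝ := x - x * Real.log x

/-- The upper bound `UB(X, id, ζ̲_{1/e}) = X₀ + ∫_{X₀}^∞ E[λ(m)] dm` of Doob's `L¹`
inequality, as a value in `[0,∞]`: here `λ(m) = 1` for `m < 1` and
`λ(m) = (X_T - m/e)⁺/(m - m/e)` for `m ≥ 1`. -/
def doobL1UB {Ω : Type} [m0 : MeasurableSpace Ω] (μ : Measure Ω)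
    (X : ℝ → Ω → ℝ) (T x₀ : ℝ) : ℝ≥0∞ :=
  ENNReal.ofReal x₀ +
    ∫⁻ m in Set.Ioi x₀,
      (if m < 1 then 1
       else ENNReal.ofReal (1 / (m - m / Real.exp 1))
              * ∫⁻ ω, ENNReal.ofReal (X T ω - m / Real.exp 1) ∂μ)



open Finset in
lemma doob_finite_aux {Ω : Type} [m0 : MeasurableSpace Ω] (μ : Measure Ω) [IsProbabilityMeasure μ]
    (ℱ : Filtration ℝ m0) (X : ℝ → Ω → ℝ) (hX : Submartingale X ℱ μ)
    (σ : ℕ → ℝ) (hσ : Monotone σ) (N : ℕ) (a ε : ℝ) (hε : 0 < ε) :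
    ENNReal.ofReal ε * μ {ω | ∃ j ≤ N, ε ≤ X (σ j) ω - a}
      ≤ ∫⁻ ω, ENNReal.ofReal (X (σ N) ω - a) ∂μ := by
  set 𝒢 : Filtration ℕ m0 :=
    ⟨fun n => ℱ (σ n), fun i j hij => ℱ.mono (hσ hij), fun n => ℱ.le _⟩ with h𝒢
  set Z : ℕ → Ω → ℝ := fun n ω => X (σ n) ω - a with hZ_def
  have hZint : ∀ n, Integrable (Z n) μ := fun n =>
    (hX.integrable (σ n)).sub (integrable_const a)
  have hZ : Submartingale Z 𝒢 μ := by
    refine ⟨fun n => ((hX.stronglyAdapted (σ n)).sub stronglyMeasurable_const), fun i j hij => ?_,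
      hZint⟩
    have h1 := hX.2.1 (σ i) (σ j) (hσ hij)
    have h2 : μ[Z j | 𝒢 i] =ᵐ[μ]
        (μ[X (σ j) | ℱ (σ i)]) - (fun _ => a) := by
      refine EventuallyEq.trans ?_
        ((condExp_sub (m := ℱ (σ i)) (μ := μ) (hX.integrable (σ j))
          (integrable_const a)).trans ?_)
      · rfl
      · rw [condExp_const (ℱ.le (σ i))]
    filter_upwards [h1, h2] with ω h1ω h2ω
    show Z i ω ≤ (μ[Z j | 𝒢 i]) ω
    rw [h2ω]
    simpa [hZ_def] using h1ω
  have hY : Submartingale (Z ⊔ 0) 𝒢 μ := hZ.sup (martingale_zero _ _ _).submartingale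
  have happ : ∀ n ω, (Z ⊔ 0) n ω = max (Z n ω) 0 := fun n ω => rfl
  have hYnn : (0 : ℕ → Ω → ℝ) ≤ Z ⊔ 0 := le_sup_right
  have hYint : Integrable ((Z ⊔ 0) N) μ := by
    have := (hZint N).pos_part
    convert this using 1
    rfl
  set ε' : ℝ≥0 := ⟨ε, hε.le⟩ with hε'
  have hmax := maximal_ineq hY hYnn (ε := ε') N
  have hsub : {ω | ∃ j ≤ N, ε ≤ X (σ j) ω - a} ⊆
      {ω | (ε' : ℝ) ≤ (Finset.range (N + 1)).sup' Finset.nonempty_range_add_one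
        fun k => (Z ⊔ 0) k ω} := by
    rintro ω ⟨j, hjN, hj⟩
    refine le_trans ?_ (Finset.le_sup' (fun k => (Z ⊔ 0) k ω)
      (Finset.mem_range.2 (Nat.lt_succ_of_le hjN)))
    rw [happ]
    exact le_trans hj (le_max_left _ _)
  have hnnae : 0 ≤ᵐ[μ] (Z ⊔ 0) N := ae_of_all _ fun ω => hYnn N ω
  calc ENNReal.ofReal ε * μ {ω | ∃ j ≤ N, ε ≤ X (σ j) ω - a}
      ≤ ENNReal.ofReal ε * μ {ω | (ε' : ℝ) ≤ (Finset.range (N + 1)).sup'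
          Finset.nonempty_range_add_one fun k => (Z ⊔ 0) k ω} :=
        mul_le_mul_right (measure_mono hsub) _
    _ = ε' • μ {ω | (ε' : ℝ) ≤ (Finset.range (N + 1)).sup'
          Finset.nonempty_range_add_one fun k => (Z ⊔ 0) k ω} := by
        rw [ENNReal.smul_def, smul_eq_mul]; congr 1
        rw [hε', ENNReal.ofReal]; congr 1; exact Real.toNNReal_of_nonneg hε.le
    _ ≤ ENNReal.ofReal (∫ ω in {ω | (ε' : ℝ) ≤ (Finset.range (N + 1)).sup'
          Finset.nonempty_range_add_one fun k => (Z ⊔ 0) k ω}, (Z ⊔ 0) N ω ∂μ) := hmax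
    _ ≤ ENNReal.ofReal (∫ ω, (Z ⊔ 0) N ω ∂μ) :=
        ENNReal.ofReal_le_ofReal (setIntegral_le_integral hYint hnnae)
    _ = ∫⁻ ω, ENNReal.ofReal ((Z ⊔ 0) N ω) ∂μ :=
        ofReal_integral_eq_lintegral_ofReal hYint hnnae
    _ = ∫⁻ ω, ENNReal.ofReal (X (σ N) ω - a) ∂μ := by
        refine lintegral_congr fun ω => ?_
        rw [happ]
        rcases le_or_gt (X (σ N) ω - a) 0 with h | h
        · rw [show max (Z N ω) 0 = 0 from max_eq_right (by simpa [hZ_def] using h),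
            ENNReal.ofReal_eq_zero.2 h, ENNReal.ofReal_zero]
        · rw [show max (Z N ω) 0 = X (σ N) ω - a from max_eq_left (by simpa [hZ_def] using h.le)]


lemma doob_bound {Ω : Type} [m0 : MeasurableSpace Ω] (μ : Measure Ω) [IsProbabilityMeasure μ] (T : ℝ)
    (ℱ : Filtration ℝ m0) (X : ℝ → Ω → ℝ) (hX : Submartingale X ℱ μ)
    (d : ℕ → ℝ) (hdT : ∀ i, d i ≤ T) (hd0 : d 0 = T) (n : ℕ) (m : ℝ) (hm : 1 ≤ m) :
    μ {ω | ∃ i ≤ n, m < X (d i) ω}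
      ≤ ENNReal.ofReal (1 / (m - m / Real.exp 1))
          * ∫⁻ ω, ENNReal.ofReal (X T ω - m / Real.exp 1) ∂μ := by
  set e := Real.exp 1 with he_def
  have he : (2.7:ℝ) < e := lt_trans (by norm_num) Real.exp_one_gt_d9
  set a := m / e with ha_def
  set ε := m - m / e with hε_def
  have hε : 0 < ε := by
    rw [hε_def]
    have : m / e < m := by
      rw [div_lt_iff₀ (by linarith)]
      nlinarith
    linarith
  -- sorted enumeration of the finite set of times
  set F : Finset ℝ := (Finset.range (n + 1)).image d with hF_def
  have hFne : F.Nonempty := ⟨d 0, Finset.mem_image.2 ⟨0, Finset.mem_range.2 (Nat.succ_pos n), rfl⟩⟩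
  have hk : 0 < F.card := Finset.card_pos.2 hFne
  set σ : ℕ → ℝ := fun j => F.orderEmbOfFin rfl ⟨min j (F.card - 1), by omega⟩ with hσ_def
  have hσmono : Monotone σ := by
    intro i j hij
    exact (F.orderEmbOfFin rfl).monotone (by simp [Fin.le_def]; omega)
  have hσmem : ∀ j, σ j ∈ F := fun j => Finset.orderEmbOfFin_mem F rfl _
  have hσle : ∀ j, σ j ≤ T := by
    intro j
    obtain ⟨i, _, hi⟩ := Finset.mem_image.1 (hσmem j)
    rw [← hi]; exact hdT i
  have hcover : ∀ i ≤ n, ∃ j ≤ F.card - 1, σ j = d i := by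
    intro i hi
    have hdi : d i ∈ F := Finset.mem_image.2 ⟨i, Finset.mem_range.2 (Nat.lt_succ_of_le hi), rfl⟩
    have : d i ∈ Set.range (F.orderEmbOfFin rfl) := by
      rw [Finset.range_orderEmbOfFin]; exact hdi
    obtain ⟨⟨j, hj⟩, hji⟩ := this
    refine ⟨j, by omega, ?_⟩
    rw [hσ_def]
    simpa [min_eq_left (by omega : j ≤ F.card - 1)] using hji
  have hσtop : σ (F.card - 1) = T := by
    obtain ⟨j, hj, hjT⟩ := hcover 0 (Nat.zero_le n)
    rw [hd0] at hjT
    refine le_antisymm (hσle _) ?_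
    rw [← hjT]
    exact hσmono hj
  have key := doob_finite_aux μ ℱ X hX σ hσmono (F.card - 1) a ε hε
  rw [hσtop] at key
  have hsub : {ω | ∃ i ≤ n, m < X (d i) ω} ⊆ {ω | ∃ j ≤ F.card - 1, ε ≤ X (σ j) ω - a} := by
    rintro ω ⟨i, hin, hi⟩
    obtain ⟨j, hj, hji⟩ := hcover i hin
    exact ⟨j, hj, by rw [hji, hε_def, ha_def]; linarith⟩
  calc μ {ω | ∃ i ≤ n, m < X (d i) ω}
      ≤ μ {ω | ∃ j ≤ F.card - 1, ε ≤ X (σ j) ω - a} := measure_mono hsub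
    _ = ENNReal.ofReal (1 / ε) * (ENNReal.ofReal ε * μ _) := by
        rw [← mul_assoc, ← ENNReal.ofReal_mul (by positivity), one_div,
          inv_mul_cancel₀ hε.ne', ENNReal.ofReal_one, one_mul]
    _ ≤ ENNReal.ofReal (1 / ε) * ∫⁻ ω, ENNReal.ofReal (X T ω - a) ∂μ :=
        mul_le_mul_right key _


lemma nonneg_aux (x b : ℝ) (hx : 0 ≤ x) (hb : 1 ≤ b) :
    0 ≤ x * Real.log x - x * Real.log b + b / Real.exp 1 := by
  have he : (0:ℝ) < Real.exp 1 := Real.exp_pos 1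
  have hb0 : (0:ℝ) < b := lt_of_lt_of_le one_pos hb
  rcases eq_or_lt_of_le hx with h | hx0
  · simp [← h]; positivity
  · have h1 : Real.log (b / (Real.exp 1 * x)) ≤ b / (Real.exp 1 * x) - 1 :=
      Real.log_le_sub_one_of_pos (by positivity)
    rw [Real.log_div hb0.ne' (by positivity), Real.log_mul he.ne' hx0.ne', Real.log_exp] at h1
    have h2 := mul_le_mul_of_nonneg_left h1 hx0.le
    have h3 : x * (b / (Real.exp 1 * x) - 1) = b / Real.exp 1 - x := by
      field_simp
    rw [h3] at h2
    nlinarith [h2]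


lemma inner_calc (x b : ℝ) (hx : 0 ≤ x) (hb : 1 ≤ b) :
    (∫⁻ m in Set.Ioi b, ENNReal.ofReal (1 / (m - m / Real.exp 1))
        * ENNReal.ofReal (x - m / Real.exp 1))
      ≤ ENNReal.ofReal ((Real.exp 1 / (Real.exp 1 - 1))
          * (x * Real.log x - x * Real.log b + b / Real.exp 1)) := by
  set e := Real.exp 1 with he_def
  have he : (2.7:ℝ) < e := lt_trans (by norm_num) Real.exp_one_gt_d9
  have he0 : (0:ℝ) < e := by linarith
  have he1 : (0:ℝ) < e - 1 := by linarith
  have hb0 : (0:ℝ) < b := lt_of_lt_of_le one_pos hb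
  set c := e / (e - 1) with hc_def
  have hc0 : (0:ℝ) < c := by positivity
  have hzero : ∀ m : ℝ, e * x ≤ m →
      ENNReal.ofReal (1 / (m - m / e)) * ENNReal.ofReal (x - m / e) = 0 := by
    intro m hm
    have : x - m / e ≤ 0 := by
      rw [sub_nonpos, le_div_iff₀ he0]; linarith
    rw [ENNReal.ofReal_eq_zero.2 this, mul_zero]
  rcases le_or_gt (e * x) b with hxb | hxb
  · have h0 : (∫⁻ m in Set.Ioi b, ENNReal.ofReal (1 / (m - m / e))
        * ENNReal.ofReal (x - m / e)) = 0 := by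
      rw [← lintegral_zero (μ := volume.restrict (Set.Ioi b))]
      refine setLIntegral_congr_fun measurableSet_Ioi (fun m hm => ?_)
      exact hzero m (le_trans hxb (le_of_lt hm))
    rw [h0]; exact zero_le
  · have hx0 : (0:ℝ) < x := by nlinarith
    set f : ℝ → ℝ := fun m => c * (x / m - 1 / e) with hf_def
    have hfcont : ContinuousOn f (Set.Icc b (e * x)) := by
      refine continuousOn_const.mul (ContinuousOn.sub ?_ continuousOn_const)
      exact continuousOn_const.div continuousOn_id
        (fun m hm => (lt_of_lt_of_le hb0 hm.1).ne')
    have hfnn : ∀ m ∈ Set.Ioc b (e * x), 0 ≤ f m := by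
      intro m hm
      have hm0 : (0:ℝ) < m := lt_trans hb0 hm.1
      have : 1 / e ≤ x / m := by
        rw [div_le_div_iff₀ he0 hm0]; nlinarith [hm.2]
      have := sub_nonneg.2 this
      positivity
    have hsplit : Set.Ioi b = Set.Ioc b (e * x) ∪ Set.Ioi (e * x) :=
      (Set.Ioc_union_Ioi_eq_Ioi hxb.le).symm
    rw [hsplit, lintegral_union measurableSet_Ioi (Set.Ioc_disjoint_Ioi le_rfl)]
    have h2 : (∫⁻ m in Set.Ioi (e * x), ENNReal.ofReal (1 / (m - m / e))
        * ENNReal.ofReal (x - m / e)) = 0 := by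
      rw [← lintegral_zero (μ := volume.restrict (Set.Ioi (e * x)))]
      refine setLIntegral_congr_fun measurableSet_Ioi (fun m hm => ?_)
      exact hzero m (le_of_lt hm)
    rw [h2, add_zero]
    have h3 : (∫⁻ m in Set.Ioc b (e * x), ENNReal.ofReal (1 / (m - m / e))
        * ENNReal.ofReal (x - m / e)) = ∫⁻ m in Set.Ioc b (e * x), ENNReal.ofReal (f m) := by
      refine setLIntegral_congr_fun measurableSet_Ioc (fun m hm => ?_)
      have hm0 : (0:ℝ) < m := lt_trans hb0 hm.1
      have hden : (0:ℝ) < m - m / e := by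
        have hrw : m - m / e = m * (e - 1) / e := by field_simp
        rw [hrw]; positivity
      rw [← ENNReal.ofReal_mul (by positivity : (0:ℝ) ≤ 1 / (m - m / e))]
      congr 1
      rw [hf_def]
      have hA : m - m / e = m * (e - 1) / e := by field_simp
      rw [hA, hc_def]
      field_simp
    rw [h3]
    have hint : IntegrableOn f (Set.Ioc b (e * x)) volume :=
      (hfcont.integrableOn_Icc).mono_set Set.Ioc_subset_Icc_self
    have h4 : (∫⁻ m in Set.Ioc b (e * x), ENNReal.ofReal (f m))
        = ENNReal.ofReal (∫ m in Set.Ioc b (e * x), f m) := by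
      rw [MeasureTheory.ofReal_integral_eq_lintegral_ofReal hint
        ((ae_restrict_iff' measurableSet_Ioc).2 (ae_of_all _ hfnn))]
    rw [h4]
    have h5 : (∫ m in Set.Ioc b (e * x), f m) = ∫ m in b..(e * x), f m :=
      (intervalIntegral.integral_of_le hxb.le).symm
    have h6 : (∫ m in b..(e * x), f m)
        = c * (x * Real.log (e * x) - (e * x) / e) - c * (x * Real.log b - b / e) := by
      refine intervalIntegral.integral_eq_sub_of_hasDerivAt
        (f := fun m => c * (x * Real.log m - m / e)) (fun m hm => ?_) ?_
      · rw [Set.uIcc_of_le hxb.le] at hm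
        have hm0 : (0:ℝ) < m := lt_of_lt_of_le hb0 hm.1
        have h1 : HasDerivAt (fun m : ℝ => x * Real.log m) (x * m⁻¹) m :=
          (Real.hasDerivAt_log hm0.ne').const_mul x
        have h2' : HasDerivAt (fun m : ℝ => m / e) (1 / e) m := by
          simpa using (hasDerivAt_id m).div_const e
        have := (h1.sub h2').const_mul c
        simpa [hf_def, div_eq_mul_inv, mul_comm] using this
      · exact (hfcont.mono (by rw [Set.uIcc_of_le hxb.le])).intervalIntegrable
    rw [h5, h6]
    have hlog : Real.log (e * x) = 1 + Real.log x := by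
      rw [Real.log_mul he0.ne' hx0.ne', he_def, Real.log_exp]
    have h7 : c * (x * Real.log (e * x) - e * x / e) - c * (x * Real.log b - b / e)
        = c * (x * Real.log x - x * Real.log b + b / e) := by
      rw [hlog]; field_simp; ring
    rw [h7]


lemma runMax_le_iSup (f : ℝ → ℝ) (T : ℝ) (hT : 0 ≤ T) (hf : IsCadlag f)
    (d : ℕ → ℝ) (hd0 : d 0 = T)
    (hdens : ∀ s, 0 ≤ s → s < T → ∀ δ > 0, ∃ i, s < d i ∧ d i ≤ T ∧ d i < s + δ) :
    ENNReal.ofReal (runMax f T) ≤ ⨆ i, ENNReal.ofReal (f (d i)) := by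
  set G := ⨆ i, ENNReal.ofReal (f (d i)) with hG_def
  have key : ∀ s ∈ Set.Icc (0:ℝ) T, ENNReal.ofReal (f s) ≤ G := by
    intro s hs
    rcases eq_or_lt_of_le hs.2 with hsT | hsT
    · rw [hsT, ← hd0]; exact le_iSup (fun i => ENNReal.ofReal (f (d i))) 0
    · set A := {t : ℝ | (s < t ∧ t ≤ T) ∧ ∃ i, d i = t} with hA_def
      have hne : (nhdsWithin s A).NeBot := by
        rw [← mem_closure_iff_nhdsWithin_neBot]
        rw [Metric.mem_closure_iff]
        intro δ hδ
        obtain ⟨i, h1, h2, h3⟩ := hdens s hs.1 hsT δ hδ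
        exact ⟨d i, ⟨⟨h1, h2⟩, ⟨i, rfl⟩⟩, by
          rw [Real.dist_eq, abs_of_nonpos (by linarith)]; linarith⟩
      have htend : Filter.Tendsto f (nhdsWithin s A) (nhds (f s)) :=
        (hf.1 s).mono_left (nhdsWithin_mono s (fun t ht => le_of_lt ht.1.1))
      have htend2 : Filter.Tendsto (fun t => ENNReal.ofReal (f t)) (nhdsWithin s A)
          (nhds (ENNReal.ofReal (f s))) :=
        (ENNReal.continuous_ofReal.tendsto _).comp htend
      refine le_of_tendsto htend2 ?_
      filter_upwards [self_mem_nhdsWithin] with t ht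
      obtain ⟨i, rfl⟩ := ht.2
      exact le_iSup (fun i => ENNReal.ofReal (f (d i))) i
  by_cases hbdd : BddAbove (f '' Set.Icc 0 T)
  · by_cases hGtop : G = ⊤
    · rw [hGtop]; exact le_top
    · have h1 : runMax f T ≤ G.toReal := by
        refine csSup_le ⟨f 0, ⟨0, ⟨le_rfl, hT⟩, rfl⟩⟩ ?_
        rintro y ⟨s, hs, rfl⟩
        have := key s hs
        rcases le_or_gt (f s) 0 with h | h
        · exact le_trans h ENNReal.toReal_nonneg
        · rw [← ENNReal.ofReal_toReal hGtop] at this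
          exact (ENNReal.ofReal_le_ofReal_iff ENNReal.toReal_nonneg).1 this
      calc ENNReal.ofReal (runMax f T) ≤ ENNReal.ofReal G.toReal :=
             ENNReal.ofReal_le_ofReal h1
        _ = G := ENNReal.ofReal_toReal hGtop
  · rw [runMax, Real.sSup_of_not_bddAbove hbdd]
    simp


private lemma doob_part1
    {Ω : Type} [m0 : MeasurableSpace Ω] (μ : Measure Ω) [IsProbabilityMeasure μ]
    (T : ℝ) (hT : 0 ≤ T) (x₀ : ℝ) (hx₀ : 0 ≤ x₀)
    (ℱ : Filtration ℝ m0) (X : ℝ → Ω → ℝ)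
    (hX : Submartingale X ℱ μ)
    (hcadlag : ∀ ω, IsCadlag fun s => X s ω)
    (hnonneg : ∀ s ω, 0 ≤ X s ω) :
    (∫⁻ ω, ENNReal.ofReal (runMax (fun s => X s ω) T) ∂μ) ≤ doobL1UB μ X T x₀ := by
  obtain ⟨q, hq⟩ := exists_surjective_nat ℚ
  set d : ℕ → ℝ := fun n => Nat.casesOn n T (fun k => max 0 (min T (q k))) with hd_def
  have hd0 : d 0 = T := rfl
  have hdIcc : ∀ i, 0 ≤ d i ∧ d i ≤ T := by
    intro i
    cases i with
    | zero => exact ⟨hT, le_rfl⟩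
    | succ k => exact ⟨le_max_left _ _, max_le hT (min_le_left _ _)⟩
  have hdens : ∀ s, 0 ≤ s → s < T → ∀ δ > 0, ∃ i, s < d i ∧ d i ≤ T ∧ d i < s + δ := by
    intro s hs hsT δ hδ
    obtain ⟨r, hr1, hr2⟩ := exists_rat_btwn (lt_min hsT (by linarith : s < s + δ))
    obtain ⟨k, hk⟩ := hq r
    have hrT : (r:ℝ) ≤ T := le_of_lt (lt_of_lt_of_le hr2 (min_le_left _ _))
    have hdk : d (k+1) = r := by
      show max 0 (min T ((q k : ℚ) : ℝ)) = (r:ℝ)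
      rw [hk]
      rw [min_eq_right hrT, max_eq_right (le_trans hs hr1.le)]
    exact ⟨k+1, by rw [hdk]; exact hr1, by rw [hdk]; exact hrT,
      by rw [hdk]; exact lt_of_lt_of_le hr2 (min_le_right _ _)⟩
  have measX : ∀ t, Measurable (X t) := fun t =>
    ((hX.stronglyAdapted t).mono (ℱ.le t)).measurable
  set h : ℕ → Ω → ℝ :=
    fun n ω => Nat.rec (X (d 0) ω) (fun k acc => max acc (X (d (k+1)) ω)) n with hh_def
  have hhsucc : ∀ n ω, h (n+1) ω = max (h n ω) (X (d (n+1)) ω) := fun n ω => rfl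
  have hmono : ∀ ω, Monotone fun n => h n ω := fun ω =>
    monotone_nat_of_le_succ (fun n => le_max_left _ _)
  have hexists : ∀ n ω, ∃ i ≤ n, h n ω = X (d i) ω := by
    intro n ω
    induction n with
    | zero => exact ⟨0, le_rfl, rfl⟩
    | succ k ih =>
      obtain ⟨i, hik, hi⟩ := ih
      rw [hhsucc]
      rcases max_cases (h k ω) (X (d (k+1)) ω) with ⟨hc, _⟩ | ⟨hc, _⟩
      · exact ⟨i, le_trans hik (Nat.le_succ k), by rw [hc, hi]⟩
      · exact ⟨k+1, le_rfl, by rw [hc]⟩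
  have hle : ∀ i ω, X (d i) ω ≤ h i ω := by
    intro i ω
    cases i with
    | zero => exact le_rfl
    | succ k => rw [hhsucc]; exact le_max_right _ _
  have hnn : ∀ n ω, 0 ≤ h n ω := by
    intro n ω
    obtain ⟨i, _, hi⟩ := hexists n ω
    rw [hi]; exact hnonneg _ ω
  have hmeas : ∀ n, Measurable (h n) := by
    intro n
    induction n with
    | zero => exact measX (d 0)
    | succ k ih => exact ih.max (measX (d (k+1)))
  have hP : ∀ ω, ENNReal.ofReal (runMax (fun s => X s ω) T)
      ≤ ⨆ n, ENNReal.ofReal (h n ω) := by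
    intro ω
    refine (runMax_le_iSup (fun s => X s ω) T hT (hcadlag ω) d hd0 hdens).trans ?_
    exact iSup_le fun i => le_iSup_of_le i (ENNReal.ofReal_le_ofReal (hle i ω))
  calc (∫⁻ ω, ENNReal.ofReal (runMax (fun s => X s ω) T) ∂μ)
      ≤ ∫⁻ ω, ⨆ n, ENNReal.ofReal (h n ω) ∂μ := lintegral_mono hP
    _ = ⨆ n, ∫⁻ ω, ENNReal.ofReal (h n ω) ∂μ :=
        lintegral_iSup (fun n => (hmeas n).ennreal_ofReal)
          (fun i j hij ω => ENNReal.ofReal_le_ofReal (hmono ω hij))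
    _ ≤ doobL1UB μ X T x₀ := by
        refine iSup_le fun n => ?_
        rw [lintegral_eq_lintegral_meas_lt μ (ae_of_all _ (hnn n)) (hmeas n).aemeasurable]
        rw [show Set.Ioi (0:ℝ) = Set.Ioc 0 x₀ ∪ Set.Ioi x₀ from
          (Set.Ioc_union_Ioi_eq_Ioi hx₀).symm,
          lintegral_union measurableSet_Ioi (Set.Ioc_disjoint_Ioi le_rfl)]
        unfold doobL1UB
        refine add_le_add ?_ ?_
        · calc (∫⁻ t in Set.Ioc 0 x₀, μ {a | t < h n a})
              ≤ ∫⁻ _ in Set.Ioc 0 x₀, 1 := lintegral_mono fun t => prob_le_one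
            _ = ENNReal.ofReal x₀ := by
                rw [setLIntegral_one, Real.volume_Ioc, sub_zero]
        · refine lintegral_mono_ae ((ae_restrict_iff' measurableSet_Ioi).2
            (ae_of_all _ fun t ht => ?_))
          by_cases h1 : t < 1
          · rw [if_pos h1]; exact prob_le_one
          · rw [if_neg h1]
            push_neg at h1
            refine le_trans (measure_mono ?_)
              (doob_bound μ T ℱ X hX d (fun i => (hdIcc i).2) hd0 n t h1)
            intro ω hω
            obtain ⟨i, hi, he⟩ := hexists n ω
            exact ⟨i, hi, by rw [← he]; exact hω⟩


set_option maxHeartbeats 1000000 in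
private lemma doob_part2
    {Ω : Type} [m0 : MeasurableSpace Ω] (μ : Measure Ω) [IsProbabilityMeasure μ]
    (T : ℝ) (hT : 0 ≤ T) (x₀ : ℝ) (hx₀ : 0 ≤ x₀)
    (ℱ : Filtration ℝ m0) (X : ℝ → Ω → ℝ)
    (hX : Submartingale X ℱ μ)
    (hnonneg : ∀ s ω, 0 ≤ X s ω)
    (hinit : ∀ᵐ ω ∂μ, X 0 ω = x₀) :
    doobL1UB μ X T x₀
        + ENNReal.ofReal (Real.exp 1 / (Real.exp 1 - 1))
            * ENNReal.ofReal ((Real.exp 1)⁻¹ - Vfun (max 1 x₀))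
      ≤ ENNReal.ofReal (Real.exp 1 / (Real.exp 1 - 1))
            * (∫⁻ ω, ENNReal.ofReal (X T ω * Real.log (X T ω) + (Real.exp 1)⁻¹) ∂μ)
        + ENNReal.ofReal (Real.exp 1 / (Real.exp 1 - 1))
            * ENNReal.ofReal (Vfun (max 1 x₀) - (Real.exp 1)⁻¹) := by
  set e := Real.exp 1 with he_def
  have he : (2.7:ℝ) < e := lt_trans (by norm_num) Real.exp_one_gt_d9
  have he0 : (0:ℝ) < e := by linarith
  have he1 : (0:ℝ) < e - 1 := by linarith
  set c := e / (e - 1) with hc_def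
  have hc0 : (0:ℝ) < c := by positivity
  have hc1 : c * (e - 1) = e := by rw [hc_def]; field_simp
  set b := max 1 x₀ with hb_def
  have hb1 : (1:ℝ) ≤ b := le_max_left _ _
  have hb0 : (0:ℝ) < b := lt_of_lt_of_le one_pos hb1
  have hlogb : 0 ≤ Real.log b := Real.log_nonneg hb1
  have measX : ∀ t, Measurable (X t) := fun t =>
    ((hX.stronglyAdapted t).mono (ℱ.le t)).measurable
  set K := ∫⁻ ω, ENNReal.ofReal (X T ω * Real.log (X T ω) + e⁻¹) ∂μ with hK_def
  set J := ∫⁻ m in Set.Ioi b, ENNReal.ofReal (1 / (m - m / e))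
      * ∫⁻ ω, ENNReal.ofReal (X T ω - m / e) ∂μ with hJ_def
  -- Step 1: rewrite doobL1UB
  have hub : doobL1UB μ X T x₀ = ENNReal.ofReal b + J := by
    rcases le_or_gt 1 x₀ with h1 | h1
    · have hbx : b = x₀ := max_eq_right h1
      unfold doobL1UB
      rw [hbx, hJ_def, hbx]
      congr 1
      refine setLIntegral_congr_fun measurableSet_Ioi (fun m hm => ?_)
      rw [if_neg (not_lt.2 (le_trans h1 (le_of_lt hm)))]
    · have hbx : b = 1 := max_eq_left h1.le
      unfold doobL1UB
      rw [show Set.Ioi x₀ = Set.Ioc x₀ 1 ∪ Set.Ioi 1 from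
        (Set.Ioc_union_Ioi_eq_Ioi h1.le).symm,
        lintegral_union measurableSet_Ioi (Set.Ioc_disjoint_Ioi le_rfl)]
      have hA : (∫⁻ m in Set.Ioc x₀ 1,
          (if m < 1 then (1:ℝ≥0∞) else ENNReal.ofReal (1 / (m - m / e))
            * ∫⁻ ω, ENNReal.ofReal (X T ω - m / e) ∂μ)) = ENNReal.ofReal (1 - x₀) := by
        have hne : ∀ᵐ m : ℝ ∂volume, m ≠ 1 := by
          rw [ae_iff]
          have : {a : ℝ | ¬ a ≠ 1} = {1} := by ext a; simp
          rw [this]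
          exact Real.volume_singleton
        have h2 : ∀ᵐ m ∂(volume.restrict (Set.Ioc x₀ 1)),
            (if m < 1 then (1:ℝ≥0∞) else ENNReal.ofReal (1 / (m - m / e))
              * ∫⁻ ω, ENNReal.ofReal (X T ω - m / e) ∂μ) = 1 := by
          filter_upwards [ae_restrict_mem measurableSet_Ioc, ae_restrict_of_ae hne]
            with m hm hm1
          rw [if_pos (lt_of_le_of_ne hm.2 hm1)]
        rw [lintegral_congr_ae h2, setLIntegral_one, Real.volume_Ioc]
      have hB : (∫⁻ m in Set.Ioi 1,
          (if m < 1 then (1:ℝ≥0∞) else ENNReal.ofReal (1 / (m - m / e))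
            * ∫⁻ ω, ENNReal.ofReal (X T ω - m / e) ∂μ))
          = ∫⁻ m in Set.Ioi 1, ENNReal.ofReal (1 / (m - m / e))
            * ∫⁻ ω, ENNReal.ofReal (X T ω - m / e) ∂μ := by
        refine setLIntegral_congr_fun measurableSet_Ioi (fun m hm => ?_)
        rw [if_neg (not_lt.2 (le_of_lt hm))]
      rw [hA, hB, ← add_assoc, ← ENNReal.ofReal_add hx₀ (by linarith), hJ_def, hbx]
      norm_num
  -- Step 2: Tonelli and the pointwise inner bound
  have hswap : J = ∫⁻ ω, (∫⁻ m in Set.Ioi b, ENNReal.ofReal (1 / (m - m / e))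
      * ENNReal.ofReal (X T ω - m / e)) ∂μ := by
    rw [hJ_def]
    have h1 : ∀ m : ℝ, (ENNReal.ofReal (1 / (m - m / e))
        * ∫⁻ ω, ENNReal.ofReal (X T ω - m / e) ∂μ)
        = ∫⁻ ω, ENNReal.ofReal (1 / (m - m / e)) * ENNReal.ofReal (X T ω - m / e) ∂μ :=
      fun m => (lintegral_const_mul _ (((measX T).sub measurable_const).ennreal_ofReal)).symm
    rw [lintegral_congr h1]
    refine lintegral_lintegral_swap ?_
    refine Measurable.aemeasurable ?_
    show Measurable fun p : ℝ × Ω => ENNReal.ofReal (1 / (p.1 - p.1 / e)) * ENNReal.ofReal (X T p.2 - p.1 / e)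
    refine Measurable.mul (f := fun p : ℝ × Ω => ENNReal.ofReal (1 / (p.1 - p.1 / e)))
      (g := fun p : ℝ × Ω => ENNReal.ofReal (X T p.2 - p.1 / e)) ?_ ?_
    · exact (((measurable_id.sub (measurable_id.div_const e)).const_div 1).ennreal_ofReal).comp
        measurable_fst
    · exact (((measX T).comp measurable_snd).sub (measurable_fst.div_const e)).ennreal_ofReal
  have hJle : J ≤ ∫⁻ ω, ENNReal.ofReal (c * (X T ω * Real.log (X T ω)
      - X T ω * Real.log b + b / e)) ∂μ := by
    rw [hswap]
    exact lintegral_mono fun ω => inner_calc (X T ω) b (hnonneg T ω) hb1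
  -- Step 3: expectation facts
  set E := ∫⁻ ω, ENNReal.ofReal (X T ω) ∂μ with hE_def
  have hE : E = ENNReal.ofReal (∫ ω, X T ω ∂μ) :=
    (ofReal_integral_eq_lintegral_ofReal (hX.integrable T) (ae_of_all _ (hnonneg T))).symm
  have hEtop : E ≠ ⊤ := by rw [hE]; exact ENNReal.ofReal_ne_top
  have hx₀E : ENNReal.ofReal x₀ ≤ E := by
    have h0T : ∫ ω, X 0 ω ∂μ ≤ ∫ ω, X T ω ∂μ := by
      calc ∫ ω, X 0 ω ∂μ ≤ ∫ ω, (μ[X T | ℱ 0]) ω ∂μ :=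
            integral_mono_ae (hX.integrable 0) integrable_condExp (hX.2.1 0 T hT)
        _ = ∫ ω, X T ω ∂μ := integral_condExp (ℱ.le 0)
    have h00 : ∫ ω, X 0 ω ∂μ = x₀ := by
      rw [integral_congr_ae hinit]
      simp
    rw [hE]
    exact ENNReal.ofReal_le_ofReal (by rw [← h00]; exact h0T)
  -- Step 4: pointwise algebra
  have hptp : ∀ x : ℝ, 0 ≤ x →
      ENNReal.ofReal (c * (x * Real.log x - x * Real.log b + b / e))
        + ENNReal.ofReal (c * Real.log b) * ENNReal.ofReal x
      = ENNReal.ofReal c * ENNReal.ofReal (x * Real.log x + e⁻¹)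
        + ENNReal.ofReal (c * (b - 1) / e) := by
    intro x hx
    have hn1 : 0 ≤ c * (x * Real.log x - x * Real.log b + b / e) :=
      mul_nonneg hc0.le (nonneg_aux x b hx hb1)
    have hn2 : 0 ≤ c * Real.log b * x := by positivity
    have hn3 : 0 ≤ x * Real.log x + e⁻¹ := by
      have := nonneg_aux x 1 hx le_rfl
      rw [Real.log_one] at this
      rw [← one_div]
      linarith
    have hn4 : 0 ≤ c * (b - 1) / e := by
      have : (0:ℝ) ≤ b - 1 := by linarith
      positivity
    rw [← ENNReal.ofReal_mul (by positivity : (0:ℝ) ≤ c * Real.log b),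
      ← ENNReal.ofReal_add hn1 hn2,
      ← ENNReal.ofReal_mul hc0.le,
      ← ENNReal.ofReal_add (mul_nonneg hc0.le hn3) hn4]
    congr 1
    field_simp
    ring
  -- Step 5: H1
  have hmeas5 : Measurable fun ω => ENNReal.ofReal (c * (X T ω * Real.log (X T ω)
      - X T ω * Real.log b + b / e)) := by
    refine Measurable.ennreal_ofReal ?_
    exact (((measX T).mul ((Real.measurable_log).comp (measX T))).sub
      ((measX T).mul_const _)).add_const _ |>.const_mul c
  have hH1 : J + ENNReal.ofReal (c * Real.log b) * E
      ≤ ENNReal.ofReal c * K + ENNReal.ofReal (c * (b - 1) / e) := by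
    calc J + ENNReal.ofReal (c * Real.log b) * E
        ≤ (∫⁻ ω, ENNReal.ofReal (c * (X T ω * Real.log (X T ω)
            - X T ω * Real.log b + b / e)) ∂μ) + ENNReal.ofReal (c * Real.log b) * E :=
          add_le_add_left hJle _
      _ = ∫⁻ ω, (ENNReal.ofReal (c * (X T ω * Real.log (X T ω)
            - X T ω * Real.log b + b / e))
            + ENNReal.ofReal (c * Real.log b) * ENNReal.ofReal (X T ω)) ∂μ := by
          rw [lintegral_add_left hmeas5, hE_def, lintegral_const_mul _ (measX T).ennreal_ofReal]
      _ = ∫⁻ ω, (ENNReal.ofReal c * ENNReal.ofReal (X T ω * Real.log (X T ω) + e⁻¹)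
            + ENNReal.ofReal (c * (b - 1) / e)) ∂μ :=
          lintegral_congr fun ω => hptp (X T ω) (hnonneg T ω)
      _ = ENNReal.ofReal c * K + ENNReal.ofReal (c * (b - 1) / e) := by
          rw [lintegral_add_right _ measurable_const, lintegral_const, measure_univ, mul_one,
            hK_def, lintegral_const_mul _ (by
              exact Measurable.ennreal_ofReal (((measX T).mul
                ((Real.measurable_log).comp (measX T))).add_const _))]
  -- Step 6: the scalar inequality (**)
  have hke : c * (1 - e⁻¹) = 1 := by
    rw [hc_def]
    rw [div_mul_eq_mul_div, div_eq_one_iff_eq he1.ne']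
    field_simp
  have hceq : 1 + c / e - c = 0 := by
    have h' : c * (1 - e⁻¹) = c - c / e := by
      rw [mul_sub, mul_one, div_eq_mul_inv]
    rw [h'] at hke
    linarith
  have hstar : ENNReal.ofReal b + ENNReal.ofReal (c * (b - 1) / e)
      + ENNReal.ofReal c * ENNReal.ofReal (e⁻¹ - Vfun b)
      ≤ ENNReal.ofReal c * ENNReal.ofReal (Vfun b - e⁻¹)
        + ENNReal.ofReal (c * x₀ * Real.log b) := by
    have hzz : b * (1 + c / e - c) = 0 := by rw [hceq]; ring
    have hn4 : 0 ≤ c * (b - 1) / e := by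
      have : (0:ℝ) ≤ b - 1 := by linarith
      positivity
    rcases le_or_gt x₀ 1 with h1 | h1
    · have hbx : b = 1 := max_eq_left h1
      rw [hbx]
      have hV1 : Vfun 1 = 1 := by rw [Vfun, Real.log_one]; ring
      rw [hV1, Real.log_one]
      rw [ENNReal.ofReal_eq_zero.2 (by nlinarith : e⁻¹ - (1:ℝ) ≤ 0)]
      have h2 : c * ((1:ℝ) - 1) / e = 0 := by ring
      rw [h2, ENNReal.ofReal_zero, mul_zero, add_zero, add_zero]
      have h3 : c * x₀ * (0:ℝ) = 0 := by ring
      rw [h3, ENNReal.ofReal_zero, add_zero]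
      rw [← ENNReal.ofReal_mul hc0.le]
      exact ENNReal.ofReal_le_ofReal (by linarith [hke])
    · have hbx : b = x₀ := max_eq_right h1.le
      have hVb : Vfun b = b - b * Real.log b := rfl
      have hxlog : 0 ≤ c * x₀ * Real.log b := by
        have := hlogb; positivity
      rcases le_or_gt (e⁻¹) (Vfun b) with h2 | h2
      · rw [ENNReal.ofReal_eq_zero.2 (by linarith : e⁻¹ - Vfun b ≤ 0), mul_zero, add_zero]
        rw [← ENNReal.ofReal_add hb0.le hn4,
          ← ENNReal.ofReal_mul hc0.le,
          ← ENNReal.ofReal_add (by nlinarith : (0:ℝ) ≤ c * (Vfun b - e⁻¹)) hxlog]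
        refine ENNReal.ofReal_le_ofReal ?_
        rw [hVb, ← hbx]
        have hr2 : c * (b - 1) / e = c * b * e⁻¹ - c * e⁻¹ := by ring
        have hr3 : b * (1 + c / e - c) = b + b * c * e⁻¹ - b * c := by ring
        rw [hr3] at hzz
        rw [hr2]
        nlinarith [hzz]
      · rw [ENNReal.ofReal_eq_zero.2 (by linarith : Vfun b - e⁻¹ ≤ 0), mul_zero, zero_add]
        rw [← ENNReal.ofReal_mul hc0.le,
          ← ENNReal.ofReal_add hb0.le hn4,
          ← ENNReal.ofReal_add (by positivity) (by nlinarith : (0:ℝ) ≤ c * (e⁻¹ - Vfun b))]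
        refine ENNReal.ofReal_le_ofReal ?_
        rw [hVb, ← hbx]
        have hr2 : c * (b - 1) / e = c * b * e⁻¹ - c * e⁻¹ := by ring
        have hr3 : b * (1 + c / e - c) = b + b * c * e⁻¹ - b * c := by ring
        rw [hr3] at hzz
        rw [hr2]
        nlinarith [hzz]
  -- Final assembly
  by_cases hKtop : K = ⊤
  · rw [hKtop, ENNReal.mul_top (ENNReal.ofReal_pos.2 hc0).ne', top_add]
    exact le_top
  · set A := ENNReal.ofReal (c * Real.log b) * E with hA_def
    have hAtop : A ≠ ⊤ := ENNReal.mul_ne_top ENNReal.ofReal_ne_top hEtop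
    have hA'A : ENNReal.ofReal (c * x₀ * Real.log b) ≤ A := by
      have h4 : c * x₀ * Real.log b = (c * Real.log b) * x₀ := by ring
      rw [h4, ENNReal.ofReal_mul (by positivity)]
      exact mul_le_mul_right hx₀E _
    rw [hub]
    clear_value A K J E
    refine (ENNReal.add_le_add_iff_right hAtop).1 ?_
    calc (ENNReal.ofReal b + J + ENNReal.ofReal c * ENNReal.ofReal (e⁻¹ - Vfun b)) + A
        = (J + A) + (ENNReal.ofReal b + ENNReal.ofReal c * ENNReal.ofReal (e⁻¹ - Vfun b)) := by
          ring
      _ ≤ (ENNReal.ofReal c * K + ENNReal.ofReal (c * (b - 1) / e))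
            + (ENNReal.ofReal b + ENNReal.ofReal c * ENNReal.ofReal (e⁻¹ - Vfun b)) :=
          add_le_add_left hH1 _
      _ = ENNReal.ofReal c * K + (ENNReal.ofReal b + ENNReal.ofReal (c * (b - 1) / e)
            + ENNReal.ofReal c * ENNReal.ofReal (e⁻¹ - Vfun b)) := by ring
      _ ≤ ENNReal.ofReal c * K + (ENNReal.ofReal c * ENNReal.ofReal (Vfun b - e⁻¹)
            + ENNReal.ofReal (c * x₀ * Real.log b)) := add_le_add_right hstar _
      _ ≤ ENNReal.ofReal c * K + (ENNReal.ofReal c * ENNReal.ofReal (Vfun b - e⁻¹) + A) := by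
          gcongr
      _ = (ENNReal.ofReal c * K + ENNReal.ofReal c * ENNReal.ofReal (Vfun b - e⁻¹)) + A := by
          ring


/-- **Doob's `L¹` inequality** (Proposition 3.3 (i)): for a nonnegative càdlàg
submartingale `X` with `X_0 = X₀` a.s., with values in `[0,∞]`,
`E[X̄_T] ≤ UB(X, id, ζ̲_{1/e}) ≤ (e/(e-1)) (E[X_T log X_T] + V(1 ∨ X₀))`.
The second inequality is stated in `[0,∞]` using the decomposition
`E[X_T log X_T] = E[X_T log X_T + 1/e] - 1/e` (the integrand `x log x + 1/e` is
nonnegative), so that no truncation occurs. -/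
theorem doob_L1_inequality
    {Ω : Type} [m0 : MeasurableSpace Ω] (μ : Measure Ω) [IsProbabilityMeasure μ]
    (T : ℝ) (hT : 0 ≤ T) (x₀ : ℝ) (hx₀ : 0 ≤ x₀)
    (ℱ : Filtration ℝ m0) (X : ℝ → Ω → ℝ)
    (hX : Submartingale X ℱ μ)
    (hcadlag : ∀ ω, IsCadlag fun s => X s ω)
    (hnonneg : ∀ s ω, 0 ≤ X s ω)
    (hinit : ∀ᵐ ω ∂μ, X 0 ω = x₀) :
    (∫⁻ ω, ENNReal.ofReal (runMax (fun s => X s ω) T) ∂μ) ≤ doobL1UB μ X T x₀ ∧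
    doobL1UB μ X T x₀
        + ENNReal.ofReal (Real.exp 1 / (Real.exp 1 - 1))
            * ENNReal.ofReal ((Real.exp 1)⁻¹ - Vfun (max 1 x₀))
      ≤ ENNReal.ofReal (Real.exp 1 / (Real.exp 1 - 1))
            * (∫⁻ ω, ENNReal.ofReal (X T ω * Real.log (X T ω) + (Real.exp 1)⁻¹) ∂μ)
        + ENNReal.ofReal (Real.exp 1 / (Real.exp 1 - 1))
            * ENNReal.ofReal (Vfun (max 1 x₀) - (Real.exp 1)⁻¹) :=
  ⟨doob_part1 μ T hT x₀ hx₀ ℱ X hX hcadlag hnonneg,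
   doob_part2 μ T hT x₀ hx₀ ℱ X hX hnonneg hinit⟩
end
end
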